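/- arXiv:0712.2505 — 6 statements merged into one kernel-verified Lean document; each statement's English description precedes it below -/
import Mathlib

section
/- Let P be the symmetric integer 4×4 matrix with rows (2,-1,-1,-1), (-1,0,1,1), (-1,1,0,1), (-1,1,1,0), and let T be the permutation matrix fixing the first standard basis vector of ℤ^4 and cyclically permuting the second, third, and fourth. Then: (i) vᵀ P v ∈ 2ℤ for every v ∈ ℤ^4 (P is even); (ii) Tᵀ P T = P (the form is invariant under the order-3 action of T); (iii) there exists U ∈ GL_4(ℤ) with Uᵀ P U equal to the block diagonal matrix H ⊕ H, where H = [[0,1],[1,0]] (in particular P is unimodular); (iv) the sublattice {v ∈ ℤ^4 : Tv = v} has rank 2 and the restriction of the form P to it is positive definite. -/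
open Matrix

/-- The matrix `P` of Lemma 3.3(2) with respect to the basis `{f, e, ge, g²e}`. -/
def Pmat : Matrix (Fin 4) (Fin 4) ℤ :=
  !![2, -1, -1, -1; -1, 0, 1, 1; -1, 1, 0, 1; -1, 1, 1, 0]

/-- The permutation matrix fixing the first standard basis vector of `ℤ⁴` and cyclically
permuting the second, third and fourth. -/
def Tmat : Matrix (Fin 4) (Fin 4) ℤ :=
  !![1, 0, 0, 0; 0, 0, 0, 1; 0, 1, 0, 0; 0, 0, 1, 0]

/-- The orthogonal sum `H ⊕ H` of two hyperbolic planes `H = [[0,1],[1,0]]`. -/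
def HHmat : Matrix (Fin 4) (Fin 4) ℤ :=
  !![0, 1, 0, 0; 1, 0, 0, 0; 0, 0, 0, 1; 0, 0, 1, 0]

/-- The explicit base-change matrix. -/
def Umat : Matrix (Fin 4) (Fin 4) ℤ :=
  !![-2, -1, -1, 1; -2, -1, -2, 1; -1, 0, 0, 0; 0, -1, -1, 0]

/-- Its inverse. -/
def Vmat : Matrix (Fin 4) (Fin 4) ℤ :=
  !![0, 0, -1, 0; -1, 1, 0, -1; 1, -1, 0, 0; 1, 0, -2, -1]

/-- The fixed sublattice of `T` is isomorphic to `ℤ²`. -/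
def fixedEquiv :
    (Fin 2 → ℤ) ≃ₗ[ℤ]
      (LinearMap.ker (Tmat.mulVecLin - (LinearMap.id : (Fin 4 → ℤ) →ₗ[ℤ] Fin 4 → ℤ))) where
  toFun w := ⟨![w 0, w 1, w 1, w 1], by
    simp only [LinearMap.mem_ker, LinearMap.sub_apply, LinearMap.id_apply, sub_eq_zero,
      mulVecLin_apply]
    funext i
    fin_cases i <;>
      simp [Tmat, mulVec, dotProduct, Fin.sum_univ_four]⟩
  map_add' w₁ w₂ := by
    apply Subtype.ext
    funext i
    fin_cases i <;> rfl
  map_smul' c w := by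
    apply Subtype.ext
    funext i
    fin_cases i <;> rfl
  invFun v := ![v.1 0, v.1 1]
  left_inv w := by
    funext i
    fin_cases i <;> rfl
  right_inv := by
    rintro ⟨v, hv⟩
    simp only [LinearMap.mem_ker, LinearMap.sub_apply, LinearMap.id_apply, sub_eq_zero,
      mulVecLin_apply] at hv
    have h1 := congrFun hv 1
    have h2 := congrFun hv 2
    have h3 := congrFun hv 3
    simp [Tmat, mulVec, dotProduct, Fin.sum_univ_four] at h1 h2 h3
    apply Subtype.ext
    funext i
    fin_cases i <;> simp <;> omega


lemma Pq (v : Fin 4 → ℤ) : v ⬝ᵥ Pmat.mulVec v =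
    2 * (v 0 * v 0) - 2 * (v 0 * v 1) - 2 * (v 0 * v 2) - 2 * (v 0 * v 3)
      + 2 * (v 1 * v 2) + 2 * (v 1 * v 3) + 2 * (v 2 * v 3) := by
  simp only [dotProduct, mulVec, Fin.sum_univ_four]
  have e00 : Pmat 0 0 = 2 := by decide
  have e01 : Pmat 0 1 = -1 := by decide
  have e02 : Pmat 0 2 = -1 := by decide
  have e03 : Pmat 0 3 = -1 := by decide
  have e10 : Pmat 1 0 = -1 := by decide
  have e11 : Pmat 1 1 = 0 := by decide
  have e12 : Pmat 1 2 = 1 := by decide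
  have e13 : Pmat 1 3 = 1 := by decide
  have e20 : Pmat 2 0 = -1 := by decide
  have e21 : Pmat 2 1 = 1 := by decide
  have e22 : Pmat 2 2 = 0 := by decide
  have e23 : Pmat 2 3 = 1 := by decide
  have e30 : Pmat 3 0 = -1 := by decide
  have e31 : Pmat 3 1 = 1 := by decide
  have e32 : Pmat 3 2 = 1 := by decide
  have e33 : Pmat 3 3 = 0 := by decide
  rw [e00, e01, e02, e03, e10, e11, e12, e13, e20, e21, e22, e23, e30, e31, e32, e33]
  ring

/-- Lemma 3.3(2) : the form `P` is even, invariant under the order-3 action of `T`,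
equivalent over `ℤ` to `H ⊕ H` (in particular unimodular), and its restriction to the
rank-2 fixed sublattice of `T` is positive definite. -/
theorem stmt3 :
    (∀ v : Fin 4 → ℤ, ∃ a : ℤ, v ⬝ᵥ Pmat.mulVec v = 2 * a) ∧
    (Tmatᵀ * Pmat * Tmat = Pmat ∧ Tmat ^ 3 = 1) ∧
    (∃ U : Matrix (Fin 4) (Fin 4) ℤ, IsUnit U.det ∧ Uᵀ * Pmat * U = HHmat) ∧
    (Module.finrank ℤ
        (LinearMap.ker (Tmat.mulVecLin - (LinearMap.id : (Fin 4 → ℤ) →ₗ[ℤ] Fin 4 → ℤ))) = 2 ∧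
      ∀ v : Fin 4 → ℤ, Tmat.mulVec v = v → v ≠ 0 → 0 < v ⬝ᵥ Pmat.mulVec v) := by
  refine ⟨?_, ⟨?_, ?_⟩, ?_, ?_, ?_⟩
  · intro v
    refine ⟨v 0 * v 0 - v 0 * v 1 - v 0 * v 2 - v 0 * v 3 + v 1 * v 2 + v 1 * v 3 + v 2 * v 3, ?_⟩
    rw [Pq]
    ring
  · decide
  · decide
  · exact ⟨Umat, Matrix.isUnit_det_of_right_inverse (B := Vmat) (by decide), by decide⟩
  · rw [← fixedEquiv.finrank_eq]
    simp
  · intro v hv hv0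
    have h1 := congrFun hv 1
    have h2 := congrFun hv 2
    have h3 := congrFun hv 3
    simp [Tmat, mulVec, dotProduct, Fin.sum_univ_four] at h1 h2 h3
    have hb : v 2 = v 1 := by omega
    have hc : v 3 = v 1 := by omega
    rw [Pq, hb, hc]
    by_cases h1' : v 1 = 0
    · have ha : v 0 ≠ 0 := by
        intro h0
        apply hv0
        funext i
        fin_cases i <;> simp <;> omega
      rcases ha.lt_or_gt with h | h <;> nlinarith
    · rcases lt_or_gt_of_ne h1' with h | h <;>
        nlinarith [sq_nonneg (2 * v 0 - 3 * v 1), sq_nonneg (v 0 - v 1), sq_nonneg (v 0 - 2 * v 1)]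
end

section
/- Let q be a nonnegative integer, r = 16(5q+1), and k an integer with 0 ≤ k ≤ 16q+3. Let g : ℚ^r → ℚ^r be the linear map that cyclically permutes the coordinates within each of the k consecutive quintuples (x_1,...,x_5), (x_6,...,x_10), ..., (x_{5k-4},...,x_{5k}) and fixes all remaining coordinates. Then g maps Γ_r onto Γ_r, preserves the form B, satisfies g^5 = id, and Γ_r, regarded as a module over the group ring ℤ[ℤ/5ℤ] with a fixed generator acting as g, is isomorphic to the direct sum of k copies of ℤ[ℤ/5ℤ] and (r-5k) copies of ℤ with trivial action. -/
open scoped BigOperators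

/-- The lattice `Γ_r`: vectors `x ∈ ((1/2)ℤ)^r` with `x_i - x_j ∈ ℤ` for all `i, j` and
`x_1 + ⋯ + x_r ∈ 2ℤ`, viewed as a `ℤ`-submodule of `ℚ^r`. -/
def gammaLattice (r : ℕ) : Submodule ℤ (Fin r → ℚ) where
  carrier := {x | (∀ i, ∃ a : ℤ, 2 * x i = a) ∧ (∀ i j, ∃ a : ℤ, x i - x j = a) ∧
      (∃ a : ℤ, ∑ i, x i = 2 * a)}
  zero_mem' := ⟨fun _ => ⟨0, by simp⟩, fun _ _ => ⟨0, by simp⟩, ⟨0, by simp⟩⟩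
  add_mem' := by
    rintro x y ⟨hx1, hx2, hx3⟩ ⟨hy1, hy2, hy3⟩
    refine ⟨fun i => ?_, fun i j => ?_, ?_⟩
    · obtain ⟨a, ha⟩ := hx1 i; obtain ⟨b, hb⟩ := hy1 i
      refine ⟨a + b, ?_⟩
      push_cast
      simp only [Pi.add_apply]
      linarith
    · obtain ⟨a, ha⟩ := hx2 i j; obtain ⟨b, hb⟩ := hy2 i j
      refine ⟨a + b, ?_⟩
      push_cast
      simp only [Pi.add_apply]
      linarith
    · obtain ⟨a, ha⟩ := hx3; obtain ⟨b, hb⟩ := hy3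
      refine ⟨a + b, ?_⟩
      push_cast
      simp only [Pi.add_apply, Finset.sum_add_distrib]
      linarith
  smul_mem' := by
    rintro c x ⟨hx1, hx2, hx3⟩
    refine ⟨fun i => ?_, fun i j => ?_, ?_⟩
    · obtain ⟨a, ha⟩ := hx1 i
      refine ⟨c * a, ?_⟩
      simp only [Pi.smul_apply, zsmul_eq_mul]
      push_cast
      linear_combination (c : ℚ) * ha
    · obtain ⟨a, ha⟩ := hx2 i j
      refine ⟨c * a, ?_⟩
      simp only [Pi.smul_apply, zsmul_eq_mul]
      push_cast
      linear_combination (c : ℚ) * ha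
    · obtain ⟨a, ha⟩ := hx3
      refine ⟨c * a, ?_⟩
      simp only [Pi.smul_apply, zsmul_eq_mul, ← Finset.mul_sum]
      push_cast
      linear_combination (c : ℚ) * ha

/-- The bilinear form `B(x,y) = -(x_1 y_1 + ⋯ + x_r y_r)` on `ℚ^r`. -/
def gform (r : ℕ) (x y : Fin r → ℚ) : ℚ := -∑ i, x i * y i

/-- The permutation of `Fin r` cyclically permuting the indices within each of the first `k`
consecutive quintuples and fixing all remaining indices. -/
def sigma5 (r k : ℕ) (h : 5 * k ≤ r) : Fin r → Fin r := fun i =>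
  if hi : (i : ℕ) < 5 * k then
    ⟨5 * ((i : ℕ) / 5) + (((i : ℕ) % 5 + 1) % 5), by omega⟩
  else i

/-- The linear map on `ℚ^r` cyclically permuting the coordinates within each of the first `k`
consecutive quintuples `(x_1,…,x_5), …, (x_{5k-4},…,x_{5k})` and fixing all remaining
coordinates. -/
def g5 (r k : ℕ) (h : 5 * k ≤ r) (x : Fin r → ℚ) : Fin r → ℚ := fun i => x (sigma5 r k h i)

namespace Lem42

variable {r k : ℕ}

lemma sigma5_fix (h : 5*k ≤ r) (i : Fin r) (hi : ¬ (i:ℕ) < 5*k) : sigma5 r k h i = i :=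
  dif_neg hi

lemma sigma5_val (h : 5*k ≤ r) (i : Fin r) (hi : (i:ℕ) < 5*k) :
    (sigma5 r k h i : ℕ) = 5*((i:ℕ)/5) + (((i:ℕ)%5+1)%5) := by
  simp [sigma5, hi]

lemma sigma5_lt (h : 5*k ≤ r) (i : Fin r) (hi : (i:ℕ) < 5*k) :
    ((sigma5 r k h i : ℕ)) < 5*k := by
  rw [sigma5_val h i hi]; omega

lemma sigma5_five (h : 5*k ≤ r) (i : Fin r) :
    sigma5 r k h (sigma5 r k h (sigma5 r k h (sigma5 r k h (sigma5 r k h i)))) = i := by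
  by_cases hi : (i:ℕ) < 5*k
  · have h1 := sigma5_val h i hi
    have l1 := sigma5_lt h i hi
    have h2 := sigma5_val h _ l1
    have l2 := sigma5_lt h _ l1
    have h3 := sigma5_val h _ l2
    have l3 := sigma5_lt h _ l2
    have h4 := sigma5_val h _ l3
    have l4 := sigma5_lt h _ l3
    have h5 := sigma5_val h _ l4
    apply Fin.ext
    rw [h5, h4, h3, h2, h1]
    omega
  · rw [sigma5_fix h i hi, sigma5_fix h i hi, sigma5_fix h i hi, sigma5_fix h i hi,
      sigma5_fix h i hi]

lemma sigma5_bij (h : 5*k ≤ r) : Function.Bijective (sigma5 r k h) := by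
  have : Function.LeftInverse
      (fun i => sigma5 r k h (sigma5 r k h (sigma5 r k h (sigma5 r k h i)))) (sigma5 r k h) :=
    fun i => sigma5_five h i
  exact ⟨this.injective, fun i => ⟨_, sigma5_five h i⟩⟩

lemma sum_sigma5 (h : 5*k ≤ r) (f : Fin r → ℚ) : ∑ i, f (sigma5 r k h i) = ∑ i, f i :=
  Function.Bijective.sum_comp (sigma5_bij h) f

lemma g5_mem (h : 5*k ≤ r) (x : Fin r → ℚ) (hx : x ∈ gammaLattice r) :
    g5 r k h x ∈ gammaLattice r := by
  obtain ⟨h1, h2, h3⟩ := hx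
  exact ⟨fun i => h1 _, fun i j => h2 _ _, by
    obtain ⟨a, ha⟩ := h3
    exact ⟨a, by rw [show (∑ i, g5 r k h x i) = ∑ i, x i from sum_sigma5 h x]; exact ha⟩⟩

lemma g5_form (h : 5*k ≤ r) (x y : Fin r → ℚ) :
    gform r (g5 r k h x) (g5 r k h y) = gform r x y := by
  unfold gform g5
  rw [sum_sigma5 h (fun i => x i * y i)]

lemma g5_five (h : 5*k ≤ r) :
    g5 r k h ∘ g5 r k h ∘ g5 r k h ∘ g5 r k h ∘ g5 r k h = id := by
  funext x i
  simp only [Function.comp_apply, g5, id]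
  rw [sigma5_five h i]

end Lem42
namespace Lem42

/-! ### Integer extraction -/

def zOf (v : ℚ) : ℤ := v.num

lemma zOf_cast {v : ℚ} (h : ∃ a : ℤ, v = (a : ℚ)) : (zOf v : ℚ) = v := by
  obtain ⟨a, rfl⟩ := h; simp [zOf]

/-! ### Small sum lemmas over `ZMod 5` -/

lemma zmod5_sum {M : Type*} [AddCommMonoid M] (g : ZMod 5 → M) :
    ∑ z : ZMod 5, g z = g 0 + g 1 + g 2 + g 3 + g 4 := by
  exact Fin.sum_univ_five (f := g)

lemma zmod5_sum_neg {M : Type*} [AddCommMonoid M] (g : ZMod 5 → M) :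
    ∑ z : ZMod 5, g (-z) = ∑ z : ZMod 5, g z :=
  Equiv.sum_comp (Equiv.neg (ZMod 5)) g

lemma zmod5_sum_sub {M : Type*} [AddCommMonoid M] (g : ZMod 5 → M) (w : ZMod 5) :
    ∑ z : ZMod 5, g (z - w) = ∑ z : ZMod 5, g z :=
  Equiv.sum_comp (Equiv.subRight w) g

lemma zmod5_shift {M : Type*} [AddCommMonoid M] (g : ZMod 5 → M) (z : ZMod 5) :
    ∑ u : ZMod 5, g u = g z + g (1+z) + g (2+z) + g (3+z) + g (4+z) := by
  have h := zmod5_sum (fun u => g (u + z))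
  have h2 : ∑ u : ZMod 5, g (u + z) = ∑ u : ZMod 5, g u :=
    Equiv.sum_comp (Equiv.addRight z) g
  rw [h2] at h
  simpa using h

lemma zmod5_val_neg_sum {M : Type*} [AddCommMonoid M] (g : ℕ → M) :
    ∑ z : ZMod 5, g ((-z).val) = ∑ p ∈ Finset.range 5, g p := by
  rw [zmod5_sum (fun z => g ((-z).val))]
  rw [show ((-(0 : ZMod 5)).val) = 0 by decide, show ((-(1 : ZMod 5)).val) = 4 by decide,
    show ((-(2 : ZMod 5)).val) = 3 by decide, show ((-(3 : ZMod 5)).val) = 2 by decide,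
    show ((-(4 : ZMod 5)).val) = 1 by decide]
  rw [Finset.sum_range_succ, Finset.sum_range_succ, Finset.sum_range_succ,
    Finset.sum_range_succ, Finset.sum_range_succ, Finset.sum_range_zero]
  abel

/-! ### Range sum splitting -/

lemma sum_range_mul5 {M : Type*} [AddCommMonoid M] (K : ℕ) (y : ℕ → M) :
    ∑ v ∈ Finset.range (5*K), y v
      = ∑ j ∈ Finset.range K, ∑ p ∈ Finset.range 5, y (5*j+p) := by
  induction K with
  | zero => simp
  | succ n ih =>
    rw [Finset.sum_range_succ, ← ih, show 5*(n+1) = (5*n+4)+1 by ring,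
      Finset.sum_range_succ, Finset.sum_range_succ, Finset.sum_range_succ,
      Finset.sum_range_succ, Finset.sum_range_succ]
    rw [Finset.sum_range_succ, Finset.sum_range_succ, Finset.sum_range_succ,
      Finset.sum_range_succ, Finset.sum_range_succ, Finset.sum_range_zero]
    simp only [Nat.add_zero]
    abel

lemma sum_split {M : Type*} [AddCommMonoid M] (r k : ℕ) (hk : 1 ≤ k) (hr : 5*k+1 ≤ r)
    (y : ℕ → M) :
    ∑ v ∈ Finset.range r, y v
      = (∑ j ∈ Finset.range (k-1), ∑ p ∈ Finset.range 5, y (5*j+p))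
        + (∑ p ∈ Finset.range 5, y (5*(k-1)+p))
        + (∑ t ∈ Finset.range (r - 5*k - 1), y (5*k+t))
        + y (r-1) := by
  have e1 : ∑ v ∈ Finset.Ico 0 (5*(k-1)), y v
      = ∑ j ∈ Finset.range (k-1), ∑ p ∈ Finset.range 5, y (5*j+p) := by
    rw [← Finset.range_eq_Ico, sum_range_mul5]
  have e2 : ∑ v ∈ Finset.Ico (5*(k-1)) (5*k), y v
      = ∑ p ∈ Finset.range 5, y (5*(k-1)+p) := by
    rw [Finset.sum_Ico_eq_sum_range]
    apply Finset.sum_congr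
    · congr 1; omega
    · intro p _; rfl
  have e3 : ∑ v ∈ Finset.Ico (5*k) (r-1), y v
      = ∑ t ∈ Finset.range (r - 5*k - 1), y (5*k+t) := by
    rw [Finset.sum_Ico_eq_sum_range]
    apply Finset.sum_congr
    · congr 1; omega
    · intro t _; rfl
  have e4 : ∑ v ∈ Finset.Ico (r-1) r, y v = y (r-1) := by
    rw [Finset.sum_Ico_eq_sum_range, show r - (r-1) = 1 by omega, Finset.sum_range_one, Nat.add_zero]
  rw [Finset.range_eq_Ico,
    ← Finset.sum_Ico_consecutive y (Nat.zero_le (5*(k-1))) (by omega : 5*(k-1) ≤ r),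
    ← Finset.sum_Ico_consecutive y (by omega : 5*(k-1) ≤ 5*k) (by omega : 5*k ≤ r),
    ← Finset.sum_Ico_consecutive y (by omega : 5*k ≤ r-1) (by omega : r-1 ≤ r),
    e1, e2, e3, e4]
  abel

end Lem42
namespace Lem42

/-! ### The construction, `k ≥ 1` -/

def bget {k : ℕ} (b : Fin k → ZMod 5 → ℤ) (j : ℕ) (z : ZMod 5) : ℤ :=
  if h : j < k then b ⟨j, h⟩ z else 0

def cget {m : ℕ} (c : Fin m → ℤ) (t : ℕ) : ℤ :=
  if h : t < m then c ⟨t, h⟩ else 0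

def fB {k : ℕ} (b : Fin k → ZMod 5 → ℤ) : ZMod 5 → ℤ := fun z => bget b (k-1) z

def nOf {m : ℕ} (c : Fin m → ℤ) : ℤ := cget c (m-1)

def SB {k : ℕ} (b : Fin k → ZMod 5 → ℤ) : ℤ :=
  ∑ j ∈ Finset.range (k-1), ∑ z : ZMod 5, bget b j z

def SC {m : ℕ} (c : Fin m → ℤ) : ℤ := ∑ t ∈ Finset.range (m-1), cget c t

def NB {k m : ℕ} (R2 : ℤ) (b : Fin k → ZMod 5 → ℤ) (c : Fin m → ℤ) : ℤ :=
  R2 * nOf c + (SB b + SC c)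

def nuB (r k : ℕ) (R2 : ℤ) (b : Fin k → ZMod 5 → ℤ) (c : Fin (r - 5*k) → ℤ) (v : ℕ) : ℤ :=
  if v < 5*(k-1) then bget b (v/5) (-((v % 5 : ℕ) : ZMod 5))
  else if v < 5*k then
    -(fB b ((2:ZMod 5) - ((v % 5 : ℕ) : ZMod 5)) + fB b ((4:ZMod 5) - ((v % 5 : ℕ) : ZMod 5)))
      + 2*(nOf c) - NB R2 b c
  else if v < r - 1 then cget c (v - 5*k)
  else 0

def GB (r k : ℕ) (R2 : ℤ) (b : Fin k → ZMod 5 → ℤ) (c : Fin (r - 5*k) → ℤ) : Fin r → ℚ :=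
  fun i => (nOf c : ℚ)/2 + (nuB r k R2 b c i.val : ℚ)

def FB (r k : ℕ) (hr : 5*k+1 ≤ r) (x : Fin r → ℚ) :
    (Fin k → ZMod 5 → ℤ) × (Fin (r - 5*k) → ℤ) :=
  (fun j z =>
    if j.val + 1 = k then
      zOf (x ⟨5*(k-1) + ((0:ZMod 5) - z).val,
            by have h1 := ZMod.val_lt ((0:ZMod 5)-z); have := j.isLt; omega⟩
         + x ⟨5*(k-1) + ((1:ZMod 5) - z).val,
            by have h1 := ZMod.val_lt ((1:ZMod 5)-z); have := j.isLt; omega⟩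
         - (∑ i, x i)/2)
    else
      zOf (x ⟨5*j.val + (-z).val, by have h1 := ZMod.val_lt (-z); have := j.isLt; omega⟩
            - x ⟨r-1, by omega⟩),
   fun t =>
    if t.val + 1 = r - 5*k then zOf (2 * x ⟨r-1, by omega⟩)
    else zOf (x ⟨5*k + t.val, by have := t.isLt; omega⟩ - x ⟨r-1, by omega⟩))

/-! ### Additivity -/

variable {r k : ℕ} {R2 : ℤ}

lemma bget_add (b b' : Fin k → ZMod 5 → ℤ) (j z) :
    bget (b + b') j z = bget b j z + bget b' j z := by
  unfold bget; split <;> simp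

lemma cget_add {m : ℕ} (c c' : Fin m → ℤ) (t) :
    cget (c + c') t = cget c t + cget c' t := by
  unfold cget; split <;> simp

lemma fB_add (b b' : Fin k → ZMod 5 → ℤ) (z) : fB (b + b') z = fB b z + fB b' z :=
  bget_add b b' _ z

lemma nOf_add {m : ℕ} (c c' : Fin m → ℤ) : nOf (c + c') = nOf c + nOf c' :=
  cget_add c c' _

lemma SB_add (b b' : Fin k → ZMod 5 → ℤ) : SB (b + b') = SB b + SB b' := by
  unfold SB
  rw [← Finset.sum_add_distrib]
  exact Finset.sum_congr rfl fun j _ => by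
    rw [← Finset.sum_add_distrib]
    exact Finset.sum_congr rfl fun z _ => bget_add b b' j z

lemma SC_add {m : ℕ} (c c' : Fin m → ℤ) : SC (c + c') = SC c + SC c' := by
  unfold SC
  rw [← Finset.sum_add_distrib]
  exact Finset.sum_congr rfl fun t _ => cget_add c c' t

lemma NB_add {m : ℕ} (b b' : Fin k → ZMod 5 → ℤ) (c c' : Fin m → ℤ) :
    NB R2 (b + b') (c + c') = NB R2 b c + NB R2 b' c' := by
  unfold NB
  rw [nOf_add, SB_add, SC_add]; ring

lemma nuB_add (b b' : Fin k → ZMod 5 → ℤ) (c c' : Fin (r - 5*k) → ℤ) (v : ℕ) :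
    nuB r k R2 (b + b') (c + c') v = nuB r k R2 b c v + nuB r k R2 b' c' v := by
  unfold nuB
  split
  · exact bget_add b b' _ _
  · split
    · rw [fB_add, fB_add, nOf_add, NB_add]; ring
    · split
      · exact cget_add c c' _
      · ring

lemma GB_add (b b' : Fin k → ZMod 5 → ℤ) (c c' : Fin (r - 5*k) → ℤ) :
    GB r k R2 (b + b') (c + c') = GB r k R2 b c + GB r k R2 b' c' := by
  funext i
  simp only [GB, Pi.add_apply, nuB_add, nOf_add]
  push_cast
  ring

end Lem42
namespace Lem42

lemma zmod5_sum_const_sub {M : Type*} [AddCommMonoid M] (g : ZMod 5 → M) (w : ZMod 5) :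
    ∑ z : ZMod 5, g (w - z) = ∑ z : ZMod 5, g z :=
  Equiv.sum_comp (Equiv.subLeft w) g

variable {r k : ℕ} {R2 : ℤ} {b : Fin k → ZMod 5 → ℤ} {c : Fin (r - 5*k) → ℤ}

lemma nuB_last (hr : 5*k+1 ≤ r) : nuB r k R2 b c (r-1) = 0 := by
  unfold nuB
  rw [if_neg (by omega), if_neg (by omega), if_neg (by omega)]

lemma nuB_reg3 (hr : 5*k+1 ≤ r) (t : ℕ) (ht : t < r - 5*k - 1) :
    nuB r k R2 b c (5*k+t) = cget c t := by
  unfold nuB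
  rw [if_neg (by omega), if_neg (by omega), if_pos (by omega)]
  congr 1
  omega

lemma nuB_reg1 (j : ℕ) (z : ZMod 5) (hj : j < k-1) :
    nuB r k R2 b c (5*j + (-z).val) = bget b j z := by
  have hv : (-z).val < 5 := ZMod.val_lt _
  unfold nuB
  rw [if_pos (by omega)]
  rw [show (5*j + (-z).val)/5 = j by omega, show (5*j + (-z).val)%5 = (-z).val by omega]
  congr 1
  rw [ZMod.natCast_rightInverse (-z), neg_neg]

lemma nuB_reg2 (hk : 1 ≤ k) (hr : 5*k+1 ≤ r) (w : ZMod 5) :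
    nuB r k R2 b c (5*(k-1) + w.val)
      = -(fB b (2-w) + fB b (4-w)) + 2*(nOf c) - NB R2 b c := by
  have hv : w.val < 5 := ZMod.val_lt _
  unfold nuB
  rw [if_neg (by omega), if_pos (by omega)]
  rw [show (5*(k-1) + w.val)%5 = w.val by omega, ZMod.natCast_rightInverse w]

lemma sum_nu (hk : 1 ≤ k) (hr : 5*k+1 ≤ r) :
    ∑ v ∈ Finset.range r, nuB r k R2 b c v
      = SB b + SC c + (-(2*∑ z : ZMod 5, fB b z) + 10*(nOf c) - 5*NB R2 b c) := by
  rw [sum_split r k hk hr]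
  have eA : ∑ j ∈ Finset.range (k-1), ∑ p ∈ Finset.range 5, nuB r k R2 b c (5*j+p)
      = SB b := by
    unfold SB
    refine Finset.sum_congr rfl fun j hj => ?_
    have hj' : j < k - 1 := Finset.mem_range.mp hj
    rw [← zmod5_val_neg_sum (fun o => nuB r k R2 b c (5*j+o))]
    exact Finset.sum_congr rfl fun z _ => nuB_reg1 j z hj'
  have eB : ∑ p ∈ Finset.range 5, nuB r k R2 b c (5*(k-1)+p)
      = -(2*∑ z : ZMod 5, fB b z) + 10*(nOf c) - 5*NB R2 b c := by
    rw [← zmod5_val_neg_sum (fun o => nuB r k R2 b c (5*(k-1)+o))]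
    have : ∀ z : ZMod 5, nuB r k R2 b c (5*(k-1) + (-z).val)
        = -(fB b (2-(-z)) + fB b (4-(-z))) + 2*(nOf c) - NB R2 b c :=
      fun z => nuB_reg2 hk hr (-z)
    rw [Finset.sum_congr rfl fun z _ => this z]
    have e1 : ∑ z : ZMod 5, (-(fB b (2-(-z)) + fB b (4-(-z))) + 2*(nOf c) - NB R2 b c)
        = ∑ z : ZMod 5, (-(fB b (2-z) + fB b (4-z)) + 2*(nOf c) - NB R2 b c) :=
      zmod5_sum_neg (fun z => -(fB b (2-z) + fB b (4-z)) + 2*(nOf c) - NB R2 b c)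
    rw [e1]
    have e2 : ∑ z : ZMod 5, (-(fB b (2-z) + fB b (4-z)) + 2*(nOf c) - NB R2 b c)
        = -((∑ z : ZMod 5, fB b (2-z)) + (∑ z : ZMod 5, fB b (4-z)))
          + 5*(2*(nOf c)) - 5*(NB R2 b c) := by
      simp only [neg_add, Finset.sum_sub_distrib, Finset.sum_add_distrib,
        Finset.sum_neg_distrib, Finset.sum_const, Finset.card_univ]
      norm_num
    rw [e2, zmod5_sum_const_sub (fB b) 2, zmod5_sum_const_sub (fB b) 4]
    ring
  have eC : ∑ t ∈ Finset.range (r-5*k-1), nuB r k R2 b c (5*k+t) = SC c := by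
    unfold SC
    refine Finset.sum_congr rfl fun t ht => nuB_reg3 hr t (Finset.mem_range.mp ht)
  rw [eA, eB, eC, nuB_last hr]
  ring

lemma sum_GB (hk : 1 ≤ k) (hr : 5*k+1 ≤ r) (hR2 : (r:ℤ) = 2*R2) :
    ∑ i, GB r k R2 b c i
      = 2 * (((-(∑ z : ZMod 5, fB b z) + 5*(nOf c) - 2*NB R2 b c : ℤ)) : ℚ) := by
  unfold GB
  rw [Finset.sum_add_distrib, Finset.sum_const, Finset.card_univ, Fintype.card_fin,
    Fin.sum_univ_eq_sum_range (fun v => ((nuB r k R2 b c v : ℤ) : ℚ)) r,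
    ← Int.cast_sum, sum_nu hk hr]
  have hrq : (r:ℚ) = 2*(R2:ℚ) := by exact_mod_cast congrArg (Int.cast : ℤ → ℚ) hR2
  rw [nsmul_eq_mul, hrq]
  unfold NB
  push_cast
  ring

lemma GB_mem (hk : 1 ≤ k) (hr : 5*k+1 ≤ r) (hR2 : (r:ℤ) = 2*R2) :
    GB r k R2 b c ∈ gammaLattice r := by
  refine ⟨fun i => ⟨nOf c + 2 * nuB r k R2 b c i.val, ?_⟩,
    fun i j => ⟨nuB r k R2 b c i.val - nuB r k R2 b c j.val, ?_⟩,
    ⟨-(∑ z : ZMod 5, fB b z) + 5*(nOf c) - 2*NB R2 b c, sum_GB hk hr hR2⟩⟩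
  · unfold GB; push_cast; ring
  · unfold GB; push_cast; ring

end Lem42
namespace Lem42

lemma zOf_intCast (a : ℤ) : zOf ((a : ℤ) : ℚ) = a := Rat.num_intCast a

variable {r k : ℕ} {R2 : ℤ} {b : Fin k → ZMod 5 → ℤ} {c : Fin (r - 5*k) → ℤ}

lemma FB_GB (hk : 1 ≤ k) (hr : 5*k+1 ≤ r) (hR2 : (r:ℤ) = 2*R2) :
    FB r k hr (GB r k R2 b c) = (b, c) := by
  rw [Prod.ext_iff]
  constructor
  · funext j z
    show (FB r k hr (GB r k R2 b c)).1 j z = b j z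
    unfold FB
    dsimp only
    by_cases hjk : j.val + 1 = k
    · rw [if_pos hjk]
      have e : GB r k R2 b c ⟨5*(k-1) + ((0:ZMod 5) - z).val, by
            have h1 := ZMod.val_lt ((0:ZMod 5)-z); have := j.isLt; omega⟩
          + GB r k R2 b c ⟨5*(k-1) + ((1:ZMod 5) - z).val, by
            have h1 := ZMod.val_lt ((1:ZMod 5)-z); have := j.isLt; omega⟩
          - (∑ i, GB r k R2 b c i)/2 = ((fB b z : ℤ) : ℚ) := by
        rw [sum_GB hk hr hR2]
        unfold GB
        rw [show (⟨5*(k-1) + ((0:ZMod 5) - z).val, by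
            have h1 := ZMod.val_lt ((0:ZMod 5)-z); have := j.isLt; omega⟩ : Fin r).val
          = 5*(k-1) + ((0:ZMod 5) - z).val from rfl]
        rw [show (⟨5*(k-1) + ((1:ZMod 5) - z).val, by
            have h1 := ZMod.val_lt ((1:ZMod 5)-z); have := j.isLt; omega⟩ : Fin r).val
          = 5*(k-1) + ((1:ZMod 5) - z).val from rfl]
        rw [nuB_reg2 hk hr ((0:ZMod 5) - z), nuB_reg2 hk hr ((1:ZMod 5) - z)]
        rw [show (2:ZMod 5) - ((0:ZMod 5) - z) = 2+z by ring,
          show (4:ZMod 5) - ((0:ZMod 5) - z) = 4+z by ring,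
          show (2:ZMod 5) - ((1:ZMod 5) - z) = 1+z by ring,
          show (4:ZMod 5) - ((1:ZMod 5) - z) = 3+z by ring]
        have hs := zmod5_shift (fB b) z
        have hsq := congrArg (fun a : ℤ => (a : ℚ)) hs
        push_cast at hsq ⊢
        linear_combination hsq
      rw [e, zOf_intCast]
      unfold fB bget
      rw [dif_pos (by omega : k - 1 < k)]
      congr 1
      exact Fin.ext (by simp; omega)
    · rw [if_neg hjk]
      have hjlt : j.val < k - 1 := by have := j.isLt; omega
      have e : GB r k R2 b c ⟨5*j.val + (-z).val, by
            have h1 := ZMod.val_lt (-z); have := j.isLt; omega⟩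
          - GB r k R2 b c ⟨r-1, by omega⟩ = ((bget b j.val z : ℤ) : ℚ) := by
        unfold GB
        rw [show (⟨5*j.val + (-z).val, by
            have h1 := ZMod.val_lt (-z); have := j.isLt; omega⟩ : Fin r).val
          = 5*j.val + (-z).val from rfl]
        rw [show ((⟨r-1, by omega⟩ : Fin r)).val = r-1 from rfl]
        rw [nuB_reg1 j.val z hjlt, nuB_last hr]
        push_cast
        ring
      rw [e, zOf_intCast]
      unfold bget
      rw [dif_pos j.isLt]
  · funext t
    show (FB r k hr (GB r k R2 b c)).2 t = c t
    unfold FB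
    dsimp only
    by_cases htm : t.val + 1 = r - 5*k
    · rw [if_pos htm]
      have e : 2 * GB r k R2 b c ⟨r-1, by omega⟩ = ((nOf c : ℤ) : ℚ) := by
        unfold GB
        rw [show ((⟨r-1, by omega⟩ : Fin r)).val = r-1 from rfl, nuB_last hr]
        push_cast
        ring
      rw [e, zOf_intCast]
      unfold nOf cget
      rw [dif_pos (by omega : r - 5*k - 1 < r - 5*k)]
      congr 1
      exact Fin.ext (by simp; omega)
    · rw [if_neg htm]
      have e : GB r k R2 b c ⟨5*k + t.val, by have := t.isLt; omega⟩
          - GB r k R2 b c ⟨r-1, by omega⟩ = ((cget c t.val : ℤ) : ℚ) := by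
        unfold GB
        rw [show (⟨5*k + t.val, by have := t.isLt; omega⟩ : Fin r).val = 5*k + t.val from rfl,
          show ((⟨r-1, by omega⟩ : Fin r)).val = r-1 from rfl]
        rw [nuB_reg3 hr t.val (by have := t.isLt; omega), nuB_last hr]
        push_cast
        ring
      rw [e, zOf_intCast]
      unfold cget
      rw [dif_pos t.isLt]

end Lem42
namespace Lem42

def yOf (r : ℕ) (x : Fin r → ℚ) (v : ℕ) : ℚ := if h : v < r then x ⟨v, h⟩ else 0

lemma yOf_pos {r : ℕ} (x : Fin r → ℚ) {v : ℕ} (hv : v < r) : yOf r x v = x ⟨v, hv⟩ :=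
  dif_pos hv

variable {r k : ℕ} {R2 : ℤ}

lemma GB_FB (hk : 1 ≤ k) (hr : 5*k+1 ≤ r) (hR2 : (r:ℤ) = 2*R2)
    (x : Fin r → ℚ) (hx : x ∈ gammaLattice r) :
    GB r k R2 (FB r k hr x).1 (FB r k hr x).2 = x := by
  obtain ⟨hx1, hx2, hx3⟩ := hx
  have hL : r - 1 < r := by omega
  have hn : (((nOf (FB r k hr x).2 : ℤ)) : ℚ) = 2 * x ⟨r-1, hL⟩ := by
    unfold nOf cget
    rw [dif_pos (by omega : r - 5*k - 1 < r - 5*k)]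
    unfold FB; dsimp only
    rw [if_pos (by first | omega | (simp; omega))]
    exact zOf_cast (hx1 _)
  have hfQ : ∀ ζ : ZMod 5, (((fB (FB r k hr x).1 ζ : ℤ)) : ℚ)
      = yOf r x (5*(k-1) + ((0:ZMod 5)-ζ).val) + yOf r x (5*(k-1) + ((1:ZMod 5)-ζ).val)
        - (∑ i, x i)/2 := by
    intro ζ
    unfold fB bget
    rw [dif_pos (by omega : k-1 < k)]
    unfold FB; dsimp only
    rw [if_pos (by first | omega | (simp; omega))]
    rw [yOf_pos x (show 5*(k-1) + ((0:ZMod 5)-ζ).val < r by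
        have := ZMod.val_lt ((0:ZMod 5)-ζ); omega),
      yOf_pos x (show 5*(k-1) + ((1:ZMod 5)-ζ).val < r by
        have := ZMod.val_lt ((1:ZMod 5)-ζ); omega)]
    refine zOf_cast ?_
    obtain ⟨d1, hd1⟩ := hx2 ⟨5*(k-1) + ((0:ZMod 5)-ζ).val, by
      have := ZMod.val_lt ((0:ZMod 5)-ζ); omega⟩ ⟨r-1, hL⟩
    obtain ⟨d2, hd2⟩ := hx2 ⟨5*(k-1) + ((1:ZMod 5)-ζ).val, by
      have := ZMod.val_lt ((1:ZMod 5)-ζ); omega⟩ ⟨r-1, hL⟩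
    obtain ⟨n0, hn0⟩ := hx1 ⟨r-1, hL⟩
    obtain ⟨s0, hs0⟩ := hx3
    exact ⟨d1 + d2 + n0 - s0, by push_cast; linarith [hd1, hd2, hn0, hs0]⟩
  have hsum : ∑ i, x i
      = (∑ j ∈ Finset.range (k-1), ∑ p ∈ Finset.range 5, yOf r x (5*j+p))
        + (∑ p ∈ Finset.range 5, yOf r x (5*(k-1)+p))
        + (∑ t ∈ Finset.range (r-5*k-1), yOf r x (5*k+t)) + yOf r x (r-1) := by
    rw [← sum_split r k hk hr (yOf r x), ← Fin.sum_univ_eq_sum_range (fun v => yOf r x v) r]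
    refine Finset.sum_congr rfl fun i _ => ?_
    rw [yOf_pos x i.isLt, Fin.eta]
  have hck1 : ((k-1 : ℕ) : ℚ) = (k:ℚ) - 1 := by
    rw [Nat.cast_sub hk]; norm_num
  have hck2 : ((r-5*k-1 : ℕ) : ℚ) = (r:ℚ) - 5*(k:ℚ) - 1 := by
    rw [Nat.cast_sub (by omega : 1 ≤ r - 5*k), Nat.cast_sub (by omega : 5*k ≤ r)]
    push_cast; ring
  have hrq : (r:ℚ) = 2*(R2:ℚ) := by exact_mod_cast congrArg (Int.cast : ℤ → ℚ) hR2
  have hSB : ((SB (FB r k hr x).1 : ℤ) : ℚ)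
      = (∑ j ∈ Finset.range (k-1), ∑ p ∈ Finset.range 5, yOf r x (5*j+p))
        - ((k:ℚ)-1) * (5 * x ⟨r-1, hL⟩) := by
    unfold SB
    push_cast
    have key : ∀ j ∈ Finset.range (k-1),
        ∑ z : ZMod 5, ((bget (FB r k hr x).1 j z : ℤ):ℚ)
        = ∑ p ∈ Finset.range 5, (yOf r x (5*j+p) - x ⟨r-1, hL⟩) := by
      intro j hj
      have hj' : j < k - 1 := Finset.mem_range.mp hj
      rw [← zmod5_val_neg_sum (fun o => yOf r x (5*j+o) - x ⟨r-1, hL⟩)]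
      refine Finset.sum_congr rfl fun z _ => ?_
      unfold bget
      rw [dif_pos (by omega : j < k)]
      unfold FB; dsimp only
      rw [if_neg (by first | omega | (simp; omega))]
      rw [yOf_pos x (show 5*j + (-z).val < r by have := ZMod.val_lt (-z); omega)]
      exact zOf_cast (hx2 _ _)
    rw [Finset.sum_congr rfl key]
    simp only [Finset.sum_sub_distrib, Finset.sum_const, Finset.card_range, nsmul_eq_mul]
    rw [hck1]
    push_cast
    try ring
  have hSC : ((SC (FB r k hr x).2 : ℤ) : ℚ)
      = (∑ t ∈ Finset.range (r-5*k-1), yOf r x (5*k+t))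
        - ((r:ℚ) - 5*(k:ℚ) - 1) * x ⟨r-1, hL⟩ := by
    unfold SC
    push_cast
    have key : ∀ t ∈ Finset.range (r-5*k-1), ((cget (FB r k hr x).2 t : ℤ):ℚ)
        = yOf r x (5*k+t) - x ⟨r-1, hL⟩ := by
      intro t ht
      have ht' : t < r - 5*k - 1 := Finset.mem_range.mp ht
      unfold cget
      rw [dif_pos (by omega : t < r - 5*k)]
      unfold FB; dsimp only
      rw [if_neg (by first | omega | (simp; omega))]
      rw [yOf_pos x (show 5*k + t < r by omega)]
      exact zOf_cast (hx2 _ _)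
    rw [Finset.sum_congr rfl key]
    simp only [Finset.sum_sub_distrib, Finset.sum_const, Finset.card_range, nsmul_eq_mul]
    rw [hck2]
    try ring
  have h5exp : ∑ p ∈ Finset.range 5, yOf r x (5*(k-1)+p)
      = yOf r x (5*(k-1)) + yOf r x (5*(k-1)+1) + yOf r x (5*(k-1)+2)
        + yOf r x (5*(k-1)+3) + yOf r x (5*(k-1)+4) := by
    rw [Finset.sum_range_succ, Finset.sum_range_succ, Finset.sum_range_succ,
      Finset.sum_range_succ, Finset.sum_range_succ, Finset.sum_range_zero, Nat.add_zero]
    ring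
  have hyL : yOf r x (r-1) = x ⟨r-1, hL⟩ := yOf_pos x hL
  rw [h5exp, hyL] at hsum
  have hN : ((NB R2 (FB r k hr x).1 (FB r k hr x).2 : ℤ) : ℚ)
      = (∑ i, x i)
        - (yOf r x (5*(k-1)) + yOf r x (5*(k-1)+1) + yOf r x (5*(k-1)+2)
           + yOf r x (5*(k-1)+3) + yOf r x (5*(k-1)+4)) + 5 * x ⟨r-1, hL⟩ := by
    unfold NB
    push_cast
    rw [hn, hSB, hSC]
    linear_combination - hsum - x ⟨r-1, hL⟩ * hrq
  -- now the pointwise computation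
  funext i
  show (nOf (FB r k hr x).2 : ℚ)/2 + ((nuB r k R2 (FB r k hr x).1 (FB r k hr x).2 i.val : ℤ) : ℚ)
      = x i
  by_cases h1 : i.val < 5*(k-1)
  · have hineq : i.val % 5 < 5 := by omega
    have hiv : i.val = 5*(i.val/5) + (-(-((i.val % 5 : ℕ) : ZMod 5))).val := by
      rw [neg_neg, ZMod.val_cast_of_lt hineq]; omega
    have hnu : ((nuB r k R2 (FB r k hr x).1 (FB r k hr x).2 i.val : ℤ) : ℚ)
        = x i - x ⟨r-1, hL⟩ := by
      rw [hiv, nuB_reg1 (i.val/5) (-((i.val % 5 : ℕ) : ZMod 5)) (by first | omega | (simp; omega))]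
      unfold bget
      rw [dif_pos (by omega : i.val/5 < k)]
      unfold FB; dsimp only
      rw [if_neg (by first | omega | (simp; omega))]
      rw [zOf_cast (hx2 _ _)]
      congr 1
      exact congrArg x (Fin.ext (by simp [ZMod.val_cast_of_lt hineq]; omega))
    rw [hnu]
    linarith [hn]
  · by_cases h2 : i.val < 5*k
    · -- special quintuple
      have hf0 := hfQ 0
      rw [show ((0:ZMod 5) - 0).val = 0 by decide, show ((1:ZMod 5) - 0).val = 1 by decide]
        at hf0
      have hf1 := hfQ 1
      rw [show ((0:ZMod 5) - 1).val = 4 by decide, show ((1:ZMod 5) - 1).val = 0 by decide]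
        at hf1
      have hf2 := hfQ 2
      rw [show ((0:ZMod 5) - 2).val = 3 by decide, show ((1:ZMod 5) - 2).val = 4 by decide]
        at hf2
      have hf3 := hfQ 3
      rw [show ((0:ZMod 5) - 3).val = 2 by decide, show ((1:ZMod 5) - 3).val = 3 by decide]
        at hf3
      have hf4 := hfQ 4
      rw [show ((0:ZMod 5) - 4).val = 1 by decide, show ((1:ZMod 5) - 4).val = 2 by decide]
        at hf4
      simp only [Nat.add_zero] at hf0 hf1 hf2 hf3 hf4
      have hineq : i.val % 5 < 5 := by omega
      have hiv : i.val = 5*(k-1) + (((i.val % 5 : ℕ) : ZMod 5)).val := by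
        rw [ZMod.val_cast_of_lt hineq]; omega
      have hxi : x i = yOf r x (5*(k-1) + i.val % 5) := by
        rw [yOf_pos x (by omega : 5*(k-1) + i.val % 5 < r)]
        exact congrArg x (Fin.ext (by simp; omega))
      rw [hiv, nuB_reg2 hk hr _, hxi]
      rcases (show i.val % 5 = 0 ∨ i.val % 5 = 1 ∨ i.val % 5 = 2 ∨ i.val % 5 = 3 ∨
          i.val % 5 = 4 by omega) with h | h | h | h | h <;> rw [h] <;>
        simp only [Nat.cast_zero, Nat.cast_one, Nat.cast_ofNat, Nat.add_zero]
      · rw [show (2:ZMod 5) - 0 = 2 by decide, show (4:ZMod 5) - 0 = 4 by decide]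
        push_cast
        rw [hn, hN, hf2, hf4]
        linarith
      · rw [show (2:ZMod 5) - 1 = 1 by decide, show (4:ZMod 5) - 1 = 3 by decide]
        push_cast
        rw [hn, hN, hf1, hf3]
        linarith
      · rw [show (2:ZMod 5) - 2 = 0 by decide, show (4:ZMod 5) - 2 = 2 by decide]
        push_cast
        rw [hn, hN, hf0, hf2]
        linarith
      · rw [show (2:ZMod 5) - 3 = 4 by decide, show (4:ZMod 5) - 3 = 1 by decide]
        push_cast
        rw [hn, hN, hf4, hf1]
        linarith
      · rw [show (2:ZMod 5) - 4 = 3 by decide, show (4:ZMod 5) - 4 = 0 by decide]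
        push_cast
        rw [hn, hN, hf3, hf0]
        linarith
    · by_cases h3 : i.val < r - 1
      · have hiv : i.val = 5*k + (i.val - 5*k) := by omega
        have hnu : ((nuB r k R2 (FB r k hr x).1 (FB r k hr x).2 i.val : ℤ) : ℚ)
            = x i - x ⟨r-1, hL⟩ := by
          rw [hiv, nuB_reg3 hr (i.val - 5*k) (by first | omega | (simp; omega))]
          unfold cget
          rw [dif_pos (by omega : i.val - 5*k < r - 5*k)]
          unfold FB; dsimp only
          rw [if_neg (by first | omega | (simp; omega))]
          rw [zOf_cast (hx2 _ _)]
          congr 1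
          exact congrArg x (Fin.ext (by simp; omega))
        rw [hnu]
        linarith [hn]
      · have hiv : i.val = r - 1 := by have := i.isLt; omega
        have hie : i = ⟨r-1, hL⟩ := Fin.ext hiv
        rw [hiv, nuB_last hr, hie]
        push_cast
        linarith [hn]

end Lem42
namespace Lem42

variable {r k : ℕ} {R2 : ℤ}

lemma bget_shift (b : Fin k → ZMod 5 → ℤ) (j : ℕ) (z : ZMod 5) :
    bget (fun j z => b j (z - 1)) j z = bget b j (z - 1) := by
  unfold bget; split <;> rfl

lemma fB_shift (b : Fin k → ZMod 5 → ℤ) (z : ZMod 5) :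
    fB (fun j z => b j (z - 1)) z = fB b (z - 1) := bget_shift b _ z

lemma SB_shift (b : Fin k → ZMod 5 → ℤ) : SB (fun j z => b j (z - 1)) = SB b := by
  unfold SB
  refine Finset.sum_congr rfl fun j _ => ?_
  rw [Finset.sum_congr rfl fun z _ => bget_shift b j z]
  exact zmod5_sum_sub (bget b j) 1

lemma NB_shift (b : Fin k → ZMod 5 → ℤ) (c : Fin (r - 5*k) → ℤ) :
    NB R2 (fun j z => b j (z - 1)) c = NB R2 b c := by
  unfold NB; rw [SB_shift]

lemma GB_shift (hk : 1 ≤ k) (hr : 5*k+1 ≤ r) (h : 5*k ≤ r)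
    (b : Fin k → ZMod 5 → ℤ) (c : Fin (r - 5*k) → ℤ) :
    GB r k R2 (fun j z => b j (z - 1)) c = g5 r k h (GB r k R2 b c) := by
  funext i
  show (nOf c : ℚ)/2 + _ = (nOf c : ℚ)/2 + _
  congr 1
  rw [Int.cast_inj]
  by_cases hi : (i:ℕ) < 5*k
  · have hv := sigma5_val h i hi
    by_cases h1 : (i:ℕ) < 5*(k-1)
    · -- ordinary quintuples
      have hv1 : ((sigma5 r k h i : ℕ)) < 5*(k-1) := by rw [hv]; omega
      unfold nuB
      rw [if_pos h1, if_pos hv1, hv]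
      rw [show (5*((i:ℕ)/5) + ((i:ℕ)%5+1)%5)/5 = (i:ℕ)/5 by omega,
        show (5*((i:ℕ)/5) + ((i:ℕ)%5+1)%5)%5 = ((i:ℕ)%5+1)%5 by omega]
      rw [bget_shift]
      unfold bget
      split
      · congr 1
        push_cast [ZMod.natCast_mod]
        ring
      · rfl
    · -- the special quintuple
      have hv1 : ¬ ((sigma5 r k h i : ℕ)) < 5*(k-1) := by rw [hv]; omega
      have hv2 : ((sigma5 r k h i : ℕ)) < 5*k := sigma5_lt h i hi
      unfold nuB
      rw [if_neg h1, if_neg hv1, if_pos hi, if_pos hv2, hv]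
      rw [show (5*((i:ℕ)/5) + ((i:ℕ)%5+1)%5)%5 = ((i:ℕ)%5+1)%5 by omega]
      have hw : ((((i:ℕ)%5+1)%5 : ℕ) : ZMod 5) = (((i:ℕ)%5 : ℕ) : ZMod 5) + 1 := by
        push_cast [ZMod.natCast_mod]; ring
      rw [hw, NB_shift, fB_shift, fB_shift,
        show ((2:ZMod 5) - (((i:ℕ)%5 : ℕ) : ZMod 5)) - 1
          = 2 - ((((i:ℕ)%5 : ℕ) : ZMod 5) + 1) by ring,
        show ((4:ZMod 5) - (((i:ℕ)%5 : ℕ) : ZMod 5)) - 1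
          = 4 - ((((i:ℕ)%5 : ℕ) : ZMod 5) + 1) by ring]
  · rw [sigma5_fix h i hi]
    unfold nuB
    simp only [if_neg (show ¬ (i:ℕ) < 5*(k-1) by omega), if_neg (show ¬ (i:ℕ) < 5*k by omega)]

lemma existsE_pos (r k : ℕ) (hk : 1 ≤ k) (hr : 5*k+1 ≤ r) (R2 : ℤ)
    (hR2 : (r:ℤ) = 2*R2) (h : 5*k ≤ r) :
    ∃ e : gammaLattice r ≃ₗ[ℤ] ((Fin k → (ZMod 5 → ℤ)) × (Fin (r - 5*k) → ℤ)),
      ∀ (x : gammaLattice r) (hx : g5 r k h x.1 ∈ gammaLattice r),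
        e ⟨g5 r k h x.1, hx⟩ = ((fun j i => (e x).1 j (i - 1)), (e x).2) := by
  let E : ((Fin k → (ZMod 5 → ℤ)) × (Fin (r - 5*k) → ℤ)) ≃+ gammaLattice r :=
    { toFun := fun t => ⟨GB r k R2 t.1 t.2, GB_mem hk hr hR2⟩
      invFun := fun x => FB r k hr x.1
      left_inv := fun t => by
        show FB r k hr (GB r k R2 t.1 t.2) = t
        rw [FB_GB hk hr hR2]
      right_inv := fun x => Subtype.ext (GB_FB hk hr hR2 x.1 x.2)
      map_add' := fun t s => Subtype.ext (GB_add t.1 s.1 t.2 s.2) }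
  refine ⟨E.symm.toIntLinearEquiv, ?_⟩
  intro x hx
  set t := E.symm x with ht
  have hxt : GB r k R2 t.1 t.2 = x.1 := by
    have h1 : E t = x := E.apply_symm_apply x
    exact congrArg Subtype.val h1
  have hE : E ((fun j i => t.1 j (i - 1)), t.2) = ⟨g5 r k h x.1, hx⟩ := by
    apply Subtype.ext
    show GB r k R2 (fun j i => t.1 j (i - 1)) t.2 = g5 r k h x.1
    rw [GB_shift hk hr h, hxt]
  have hce : ⇑(E.symm.toIntLinearEquiv : gammaLattice r ≃ₗ[ℤ] _) = ⇑E.symm := AddEquiv.coe_toIntLinearEquiv E.symm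
  rw [hce, ← hE, E.symm_apply_apply]

end Lem42
namespace Lem42

lemma g5_zero {r : ℕ} (h : 5*0 ≤ r) (x : Fin r → ℚ) : g5 r 0 h x = x :=
  funext fun i => congrArg x (sigma5_fix h i (by omega))

lemma sum_split0 {M : Type*} [AddCommMonoid M] (r : ℕ) (hr2 : 2 ≤ r) (y : ℕ → M) :
    ∑ v ∈ Finset.range r, y v
      = (∑ t ∈ Finset.range (r-2), y t) + y (r-2) + y (r-1) := by
  have h1 := Finset.sum_range_succ y (r-2)
  have h2 := Finset.sum_range_succ y (r-1)
  rw [show (r-2)+1 = r-1 by omega] at h1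
  rw [show (r-1)+1 = r by omega] at h2
  rw [h2, h1]

def nu0 (r : ℕ) (R2 : ℤ) (c : Fin (r - 5*0) → ℤ) (v : ℕ) : ℤ :=
  if v < r - 2 then cget c v
  else if v = r - 2 then
    2 * cget c (r-2) - R2 * nOf c - ∑ t ∈ Finset.range (r-2), cget c t
  else 0

def G0 (r : ℕ) (R2 : ℤ) (c : Fin (r - 5*0) → ℤ) : Fin r → ℚ :=
  fun i => (nOf c : ℚ)/2 + (nu0 r R2 c i.val : ℚ)

def F0 (r : ℕ) (hr2 : 2 ≤ r) (x : Fin r → ℚ) : Fin (r - 5*0) → ℤ := fun t =>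
  if t.val + 1 = r - 5*0 then zOf (2 * x ⟨r-1, by omega⟩)
  else if t.val + 2 = r - 5*0 then zOf ((∑ i, x i)/2)
  else zOf (x ⟨t.val, by have := t.isLt; omega⟩ - x ⟨r-1, by omega⟩)

variable {r : ℕ} {R2 : ℤ}

lemma nu0_add (hr2 : 2 ≤ r) (c c' : Fin (r - 5*0) → ℤ) (v : ℕ) :
    nu0 r R2 (c + c') v = nu0 r R2 c v + nu0 r R2 c' v := by
  unfold nu0
  split
  · exact cget_add c c' v
  · split
    · rw [cget_add, nOf_add,
        Finset.sum_congr rfl fun t _ => cget_add c c' t, Finset.sum_add_distrib]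
      ring
    · ring

lemma G0_add (hr2 : 2 ≤ r) (c c' : Fin (r - 5*0) → ℤ) :
    G0 r R2 (c + c') = G0 r R2 c + G0 r R2 c' := by
  funext i
  simp only [G0, Pi.add_apply, nu0_add hr2, nOf_add]
  push_cast
  ring

lemma nu0_last (hr2 : 2 ≤ r) (c : Fin (r - 5*0) → ℤ) : nu0 r R2 c (r-1) = 0 := by
  unfold nu0
  rw [if_neg (by omega), if_neg (by omega)]

lemma nu0_dep (hr2 : 2 ≤ r) (c : Fin (r - 5*0) → ℤ) :
    nu0 r R2 c (r-2)
      = 2 * cget c (r-2) - R2 * nOf c - ∑ t ∈ Finset.range (r-2), cget c t := by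
  unfold nu0
  rw [if_neg (by omega), if_pos rfl]

lemma nu0_low (c : Fin (r - 5*0) → ℤ) (v : ℕ) (hv : v < r - 2) :
    nu0 r R2 c v = cget c v := by
  unfold nu0
  rw [if_pos hv]

lemma sum_G0 (hr2 : 2 ≤ r) (hR2 : (r:ℤ) = 2*R2) (c : Fin (r - 5*0) → ℤ) :
    ∑ i, G0 r R2 c i = 2 * ((cget c (r-2) : ℤ) : ℚ) := by
  unfold G0
  rw [Finset.sum_add_distrib, Finset.sum_const, Finset.card_univ, Fintype.card_fin,
    Fin.sum_univ_eq_sum_range (fun v => ((nu0 r R2 c v : ℤ) : ℚ)) r, ← Int.cast_sum,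
    sum_split0 r hr2, nu0_last hr2, nu0_dep hr2,
    Finset.sum_congr rfl fun v hv => nu0_low c v (Finset.mem_range.mp hv)]
  have hrq : (r:ℚ) = 2*(R2:ℚ) := by exact_mod_cast congrArg (Int.cast : ℤ → ℚ) hR2
  rw [nsmul_eq_mul, hrq]
  push_cast
  ring

lemma G0_mem (hr2 : 2 ≤ r) (hR2 : (r:ℤ) = 2*R2) (c : Fin (r - 5*0) → ℤ) :
    G0 r R2 c ∈ gammaLattice r := by
  refine ⟨fun i => ⟨nOf c + 2 * nu0 r R2 c i.val, by unfold G0; push_cast; ring⟩,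
    fun i j => ⟨nu0 r R2 c i.val - nu0 r R2 c j.val, by unfold G0; push_cast; ring⟩,
    ⟨cget c (r-2), sum_G0 hr2 hR2 c⟩⟩

lemma F0_G0 (hr2 : 2 ≤ r) (hR2 : (r:ℤ) = 2*R2) (c : Fin (r - 5*0) → ℤ) :
    F0 r hr2 (G0 r R2 c) = c := by
  funext t
  unfold F0
  by_cases h1 : t.val + 1 = r - 5*0
  · rw [if_pos h1]
    have e : 2 * G0 r R2 c ⟨r-1, by omega⟩ = ((nOf c : ℤ) : ℚ) := by
      unfold G0
      rw [show ((⟨r-1, by omega⟩ : Fin r)).val = r-1 from rfl, nu0_last hr2]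
      push_cast
      ring
    rw [e, zOf_intCast]
    unfold nOf cget
    rw [dif_pos (by omega : r - 5*0 - 1 < r - 5*0)]
    congr 1
    exact Fin.ext (by simp; omega)
  · rw [if_neg h1]
    by_cases h2 : t.val + 2 = r - 5*0
    · rw [if_pos h2]
      rw [sum_G0 hr2 hR2 c]
      rw [show (2 * ((cget c (r-2) : ℤ) : ℚ))/2 = ((cget c (r-2) : ℤ) : ℚ) by ring,
        zOf_intCast]
      unfold cget
      rw [dif_pos (by omega : r - 2 < r - 5*0)]
      congr 1
      exact Fin.ext (by simp; omega)
    · rw [if_neg h2]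
      have e : G0 r R2 c ⟨t.val, by have := t.isLt; omega⟩ - G0 r R2 c ⟨r-1, by omega⟩
          = ((cget c t.val : ℤ) : ℚ) := by
        unfold G0
        rw [show ((⟨t.val, by have := t.isLt; omega⟩ : Fin r)).val = t.val from rfl,
          show ((⟨r-1, by omega⟩ : Fin r)).val = r-1 from rfl, nu0_last hr2,
          nu0_low c t.val (by have := t.isLt; omega)]
        push_cast
        ring
      rw [e, zOf_intCast]
      unfold cget
      rw [dif_pos t.isLt]

lemma G0_F0 (hr2 : 2 ≤ r) (hR2 : (r:ℤ) = 2*R2)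
    (x : Fin r → ℚ) (hx : x ∈ gammaLattice r) : G0 r R2 (F0 r hr2 x) = x := by
  obtain ⟨hx1, hx2, hx3⟩ := hx
  have hL : r - 1 < r := by omega
  have hn : (((nOf (F0 r hr2 x) : ℤ)) : ℚ) = 2 * x ⟨r-1, hL⟩ := by
    unfold nOf cget
    rw [dif_pos (by omega : r - 5*0 - 1 < r - 5*0)]
    unfold F0; dsimp only
    rw [if_pos (by omega)]
    exact zOf_cast (hx1 _)
  have hrq : (r:ℚ) = 2*(R2:ℚ) := by exact_mod_cast congrArg (Int.cast : ℤ → ℚ) hR2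
  have hck : ((r-2 : ℕ) : ℚ) = (r:ℚ) - 2 := by
    rw [Nat.cast_sub (by omega : 2 ≤ r)]; norm_num
  have hsum : ∑ i, x i
      = (∑ t ∈ Finset.range (r-2), yOf r x t) + yOf r x (r-2) + yOf r x (r-1) := by
    rw [← sum_split0 r hr2 (yOf r x), ← Fin.sum_univ_eq_sum_range (fun v => yOf r x v) r]
    refine Finset.sum_congr rfl fun i _ => ?_
    rw [yOf_pos x i.isLt, Fin.eta]
  have hSC0 : ∀ t ∈ Finset.range (r-2), ((cget (F0 r hr2 x) t : ℤ) : ℚ)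
      = yOf r x t - x ⟨r-1, hL⟩ := by
    intro t ht
    have ht' : t < r - 2 := Finset.mem_range.mp ht
    unfold cget
    rw [dif_pos (by omega : t < r - 5*0)]
    unfold F0; dsimp only
    rw [if_neg (by omega), if_neg (by omega)]
    rw [yOf_pos x (show t < r by omega)]
    exact zOf_cast (hx2 _ _)
  have hSC : (∑ t ∈ Finset.range (r-2), ((cget (F0 r hr2 x) t : ℤ) : ℚ))
      = (∑ t ∈ Finset.range (r-2), yOf r x t) - ((r:ℚ) - 2) * x ⟨r-1, hL⟩ := by
    rw [Finset.sum_congr rfl hSC0]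
    simp only [Finset.sum_sub_distrib, Finset.sum_const, Finset.card_range, nsmul_eq_mul]
    rw [hck]
  have hmu : ((cget (F0 r hr2 x) (r-2) : ℤ) : ℚ) = (∑ i, x i)/2 := by
    unfold cget
    rw [dif_pos (by omega : r - 2 < r - 5*0)]
    unfold F0; dsimp only
    rw [if_neg (by omega), if_pos (by omega)]
    refine zOf_cast ?_
    obtain ⟨s0, hs0⟩ := hx3
    exact ⟨s0, by rw [hs0]; push_cast; ring⟩
  funext i
  show (nOf (F0 r hr2 x) : ℚ)/2 + ((nu0 r R2 (F0 r hr2 x) i.val : ℤ) : ℚ) = x i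
  by_cases h1 : i.val < r - 2
  · rw [nu0_low _ _ h1]
    have e := hSC0 i.val (Finset.mem_range.mpr h1)
    rw [yOf_pos x (show i.val < r by omega)] at e
    rw [e, Fin.eta]
    linarith [hn]
  · by_cases h2 : i.val = r - 2
    · rw [h2, nu0_dep hr2]
      have hxi : x i = yOf r x (r-2) := by
        rw [yOf_pos x (show r-2 < r by omega)]
        exact congrArg x (Fin.ext (by simp; omega))
      rw [hxi]
      push_cast
      rw [hn, hmu, hSC]
      rw [yOf_pos x hL] at hsum
      linear_combination hsum + x ⟨r-1, hL⟩ * hrq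
    · have hiv : i.val = r - 1 := by have := i.isLt; omega
      have hie : i = ⟨r-1, hL⟩ := Fin.ext hiv
      rw [hiv, nu0_last hr2, hie]
      push_cast
      linarith [hn]

lemma existsE_zero (r : ℕ) (hr2 : 2 ≤ r) (R2 : ℤ) (hR2 : (r:ℤ) = 2*R2) (h : 5*0 ≤ r) :
    ∃ e : gammaLattice r ≃ₗ[ℤ] ((Fin 0 → (ZMod 5 → ℤ)) × (Fin (r - 5*0) → ℤ)),
      ∀ (x : gammaLattice r) (hx : g5 r 0 h x.1 ∈ gammaLattice r),
        e ⟨g5 r 0 h x.1, hx⟩ = ((fun j i => (e x).1 j (i - 1)), (e x).2) := by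
  let E : ((Fin 0 → (ZMod 5 → ℤ)) × (Fin (r - 5*0) → ℤ)) ≃+ gammaLattice r :=
    { toFun := fun t => ⟨G0 r R2 t.2, G0_mem hr2 hR2 t.2⟩
      invFun := fun x => (fun j => j.elim0, F0 r hr2 x.1)
      left_inv := fun t => by
        rw [Prod.ext_iff]
        exact ⟨funext fun j => j.elim0, by
          show F0 r hr2 (G0 r R2 t.2) = t.2
          rw [F0_G0 hr2 hR2]⟩
      right_inv := fun x => Subtype.ext (G0_F0 hr2 hR2 x.1 x.2)
      map_add' := fun t s => Subtype.ext (G0_add hr2 t.2 s.2) }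
  refine ⟨E.symm.toIntLinearEquiv, ?_⟩
  intro x hx
  have h1 : (⟨g5 r 0 h x.1, hx⟩ : gammaLattice r) = x := Subtype.ext (g5_zero h x.1)
  rw [h1, Prod.ext_iff]
  exact ⟨funext fun j => j.elim0, rfl⟩

end Lem42

/-- Lemma 4.2 : for `r = 16(5q+1)` and `0 ≤ k ≤ 16q+3`, the quintuple-cycling map `g` preserves
`Γ_r` and the form `B`, has order dividing `5`, and `Γ_r` as a `ℤ[ℤ/5ℤ]`-module (a generator
acting as `g`) is isomorphic to `k` copies of `ℤ[ℤ/5ℤ]` plus `r - 5k` trivial copies of `ℤ`. -/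
theorem stmt5 (q r k : ℕ) (hr : r = 16 * (5 * q + 1)) (hk : k ≤ 16 * q + 3)
    (h : 5 * k ≤ r) :
    (∀ x ∈ gammaLattice r, g5 r k h x ∈ gammaLattice r) ∧
    (∀ x y : Fin r → ℚ, gform r (g5 r k h x) (g5 r k h y) = gform r x y) ∧
    (g5 r k h ∘ g5 r k h ∘ g5 r k h ∘ g5 r k h ∘ g5 r k h = id) ∧
    ∃ e : gammaLattice r ≃ₗ[ℤ] ((Fin k → (ZMod 5 → ℤ)) × (Fin (r - 5 * k) → ℤ)),
      ∀ (x : gammaLattice r) (hx : g5 r k h x.1 ∈ gammaLattice r),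
        e ⟨g5 r k h x.1, hx⟩ = ((fun j i => (e x).1 j (i - 1)), (e x).2) := by
  subst hr
  refine ⟨fun x hx => Lem42.g5_mem h x hx, fun x y => Lem42.g5_form h x y,
    Lem42.g5_five h, ?_⟩
  rcases Nat.eq_zero_or_pos k with hk0 | hk1
  · subst hk0
    exact Lem42.existsE_zero _ (by omega) (40*(q:ℤ)+8) (by push_cast; ring) h
  · exact Lem42.existsE_pos _ k hk1 (by omega) (40*(q:ℤ)+8) (by push_cast; ring) h
end

section
/- Let S be the set of 6-tuples (m11, m22, m12, m13, m14, m23) of nonnegative integers satisfying: m11+m22+m12+m13+m14+m23 ≤ 24; m11+m22+m12+m13+m14+m23 ≡ 4 (mod 5); -m11-m22+m14+m23 ≡ 4 (mod 5); -m11+3m22-m12+m13+m14-3m23 ≡ 1 (mod 5); 3m11-m22+m12-m13-3m14+m23 ≡ 1 (mod 5); and both b_+ = (1/5)(4 + 2m12 + 2m13 + 4m14 + 4m23) - 1 and b_- = (1/5)(20 + 4m11 + 4m22 + 2m12 + 2m13) - 1 are integers with 0 ≤ b_+ ≤ 3 and 0 ≤ b_- ≤ 19. Let τ be the involution of 6-tuples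 that swaps m11 with m22, m12 with m13, and m14 with m23. Then τ(S) = S and the number of orbits of τ acting on S is exactly 285. -/
/-- The constraints of Proposition 4.1 on the fixed point data of a locally linear pseudofree
`ℤ/5`-action on a K3 surface (`e = 24`, `s = -16`, `b₊ = 3`, `b₋ = 19`). -/
def K3Z5Cond (m11 m22 m12 m13 m14 m23 : ℕ) : Prop :=
  m11 + m22 + m12 + m13 + m14 + m23 ≤ 24 ∧
  m11 + m22 + m12 + m13 + m14 + m23 ≡ 4 [MOD 5] ∧
  (-(m11 : ℤ) - m22 + m14 + m23) ≡ 4 [ZMOD 5] ∧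
  (-(m11 : ℤ) + 3 * m22 - m12 + m13 + m14 - 3 * m23) ≡ 1 [ZMOD 5] ∧
  (3 * (m11 : ℤ) - m22 + m12 - m13 - 3 * m14 + m23) ≡ 1 [ZMOD 5] ∧
  (∃ bp : ℤ, (bp : ℚ) = 1/5 * (4 + 2 * m12 + 2 * m13 + 4 * m14 + 4 * m23) - 1 ∧
    0 ≤ bp ∧ bp ≤ 3) ∧
  (∃ bm : ℤ, (bm : ℚ) = 1/5 * (20 + 4 * m11 + 4 * m22 + 2 * m12 + 2 * m13) - 1 ∧
    0 ≤ bm ∧ bm ≤ 19)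

/-- The set `S` of 6-tuples `(m₁₁, m₂₂, m₁₂, m₁₃, m₁₄, m₂₃)` satisfying the constraints. -/
def K3Z5Set : Set (ℕ × ℕ × ℕ × ℕ × ℕ × ℕ) :=
  {m | K3Z5Cond m.1 m.2.1 m.2.2.1 m.2.2.2.1 m.2.2.2.2.1 m.2.2.2.2.2}

/-- The involution `τ` swapping `m₁₁ ↔ m₂₂`, `m₁₂ ↔ m₁₃` and `m₁₄ ↔ m₂₃` (induced by
replacing the generator `g` by `g²`). -/
def tauInv (m : ℕ × ℕ × ℕ × ℕ × ℕ × ℕ) : ℕ × ℕ × ℕ × ℕ × ℕ × ℕ :=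
  (m.2.1, m.1, m.2.2.2.1, m.2.2.1, m.2.2.2.2.2, m.2.2.2.2.1)


set_option maxRecDepth 100000
set_option maxHeartbeats 100000000

/-- Boolean form of the constraints. -/
def condB (a b c d e f : ℕ) : Bool :=
  Nat.ble (a + b + c + d + e + f) 24 &&
  Nat.beq ((a + b + c + d + e + f) % 5) 4 &&
  Nat.beq ((4*a + 4*b + e + f) % 5) 4 &&
  Nat.beq ((4*a + 3*b + 4*c + d + e + 2*f) % 5) 1 &&
  Nat.beq ((3*a + 4*b + c + 4*d + 2*e + f) % 5) 1 &&
  Nat.beq ((4 + 2*c + 2*d + 4*e + 4*f) % 5) 0 &&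
  Nat.ble (4 + 2*c + 2*d + 4*e + 4*f) 20 &&
  Nat.beq ((20 + 4*a + 4*b + 2*c + 2*d) % 5) 0 &&
  Nat.ble (20 + 4*a + 4*b + 2*c + 2*d) 100

/-- Boolean pruning condition on `(c, d, e, f)`. -/
def pruneB (c d e f : ℕ) : Bool :=
  Nat.beq ((4 + 2*c + 2*d + 4*e + 4*f) % 5) 0 && Nat.ble (4 + 2*c + 2*d + 4*e + 4*f) 20

lemma condB_eq (a b c d e f : ℕ) : condB a b c d e f = true ↔
    (a + b + c + d + e + f ≤ 24 ∧
    (a + b + c + d + e + f) % 5 = 4 ∧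
    (4*a + 4*b + e + f) % 5 = 4 ∧
    (4*a + 3*b + 4*c + d + e + 2*f) % 5 = 1 ∧
    (3*a + 4*b + c + 4*d + 2*e + f) % 5 = 1 ∧
    (4 + 2*c + 2*d + 4*e + 4*f) % 5 = 0 ∧
    4 + 2*c + 2*d + 4*e + 4*f ≤ 20 ∧
    (20 + 4*a + 4*b + 2*c + 2*d) % 5 = 0 ∧
    20 + 4*a + 4*b + 2*c + 2*d ≤ 100) := by
  simp [condB, Bool.and_eq_true, Nat.ble_eq, Nat.beq_eq_true_eq, and_assoc]

lemma pruneB_eq (c d e f : ℕ) : pruneB c d e f = true ↔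
    ((4 + 2*c + 2*d + 4*e + 4*f) % 5 = 0 ∧ 4 + 2*c + 2*d + 4*e + 4*f ≤ 20) := by
  simp [pruneB, Bool.and_eq_true, Nat.ble_eq, Nat.beq_eq_true_eq]

lemma ex_iff (N : ℕ) (B : ℕ) (h4 : 4 ≤ N) :
    (∃ bp : ℤ, (bp : ℚ) = 1/5 * (N : ℚ) - 1 ∧ 0 ≤ bp ∧ bp ≤ (B : ℤ)) ↔
      (N % 5 = 0 ∧ N ≤ 5 * (B + 1)) := by
  constructor
  · rintro ⟨bp, h, h0, hB⟩
    have h5 : (5 * (bp + 1) : ℚ) = ((N : ℕ) : ℚ) := by push_cast; linarith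
    have h5' : (5 * (bp + 1) : ℤ) = (N : ℤ) := by exact_mod_cast h5
    omega
  · rintro ⟨h5, hle⟩
    have hdvd : 5 ∣ N := Nat.dvd_of_mod_eq_zero h5
    set k : ℕ := N / 5 with hk
    have hkN : 5 * k = N := Nat.mul_div_cancel' hdvd
    refine ⟨(k : ℤ) - 1, ?_, by omega, by omega⟩
    have h' : ((5 * k : ℕ) : ℚ) = (N : ℚ) := by exact_mod_cast congrArg (Nat.cast (R := ℚ)) hkN
    push_cast at h' ⊢
    linarith

lemma bp_iff (c d e f : ℕ) :
    (∃ bp : ℤ, (bp : ℚ) = 1/5 * (4 + 2 * c + 2 * d + 4 * e + 4 * f) - 1 ∧ 0 ≤ bp ∧ bp ≤ 3) ↔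
      ((4 + 2*c + 2*d + 4*e + 4*f) % 5 = 0 ∧ 4 + 2*c + 2*d + 4*e + 4*f ≤ 20) := by
  rw [show ((4:ℚ) + 2 * c + 2 * d + 4 * e + 4 * f) = ((4 + 2*c + 2*d + 4*e + 4*f : ℕ) : ℚ) by
    push_cast; ring]
  simpa using ex_iff (4 + 2*c + 2*d + 4*e + 4*f) 3 (by omega)

lemma bm_iff (a b c d : ℕ) :
    (∃ bm : ℤ, (bm : ℚ) = 1/5 * (20 + 4 * a + 4 * b + 2 * c + 2 * d) - 1 ∧ 0 ≤ bm ∧ bm ≤ 19) ↔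
      ((20 + 4*a + 4*b + 2*c + 2*d) % 5 = 0 ∧ 20 + 4*a + 4*b + 2*c + 2*d ≤ 100) := by
  rw [show ((20:ℚ) + 4 * a + 4 * b + 2 * c + 2 * d) = ((20 + 4*a + 4*b + 2*c + 2*d : ℕ) : ℚ) by
    push_cast; ring]
  simpa using ex_iff (20 + 4*a + 4*b + 2*c + 2*d) 19 (by omega)

lemma cond_iff (a b c d e f : ℕ) : K3Z5Cond a b c d e f ↔ condB a b c d e f = true := by
  have h2 : (a+b+c+d+e+f ≡ 4 [MOD 5]) ↔ (a+b+c+d+e+f) % 5 = 4 := by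
    simp only [Nat.ModEq]; try omega
  have h3 : ((-(a:ℤ) - b + e + f) ≡ 4 [ZMOD 5]) ↔ (4*a+4*b+e+f) % 5 = 4 := by
    simp only [Int.ModEq]; try omega
  have h4 : ((-(a:ℤ) + 3 * b - c + d + e - 3 * f) ≡ 1 [ZMOD 5]) ↔
      (4*a+3*b+4*c+d+e+2*f) % 5 = 1 := by
    simp only [Int.ModEq]; try omega
  have h5 : ((3 * (a:ℤ) - b + c - d - 3 * e + f) ≡ 1 [ZMOD 5]) ↔
      (3*a+4*b+c+4*d+2*e+f) % 5 = 1 := by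
    simp only [Int.ModEq]; try omega
  unfold K3Z5Cond
  rw [condB_eq, bp_iff, bm_iff, h2, h3, h4, h5]
  tauto

/-- The list of all solutions. -/
def SL : List (ℕ × ℕ × ℕ × ℕ × ℕ × ℕ) :=
  (List.range 9).flatMap fun c =>
  (List.range 9).flatMap fun d =>
  (List.range 5).flatMap fun e =>
  (List.range 5).flatMap fun f =>
    if pruneB c d e f then
      (List.range 25).flatMap fun a =>
        ((List.range 25).filter fun b => condB a b c d e f).map fun b => (a, b, c, d, e, f)
    else []

lemma mem_SL (a b c d e f : ℕ) :
    (a, b, c, d, e, f) ∈ SL ↔ condB a b c d e f = true := by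
  constructor
  · intro hm
    simp only [SL, List.mem_flatMap, List.mem_range] at hm
    obtain ⟨c', hc', d', hd', e', he', f', hf', hm⟩ := hm
    by_cases hp : pruneB c' d' e' f' = true
    · rw [if_pos hp] at hm
      simp only [List.mem_flatMap, List.mem_map, List.mem_filter, List.mem_range] at hm
      obtain ⟨a', ha', b', ⟨⟨hb', hcond⟩, heq⟩⟩ := hm
      obtain ⟨rfl, rfl, rfl, rfl, rfl, rfl⟩ : a' = a ∧ b' = b ∧ c' = c ∧ d' = d ∧ e' = e ∧ f' = f := by
        simpa [Prod.ext_iff] using heq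
      exact hcond
    · rw [if_neg hp] at hm
      simp at hm
  · intro h
    obtain ⟨hb1, hb2, hb3, hb4, hb5, hb6, hb7, hb8, hb9⟩ := (condB_eq a b c d e f).mp h
    have hp : pruneB c d e f = true := (pruneB_eq c d e f).mpr ⟨hb6, hb7⟩
    clear hb2 hb3 hb4 hb5 hb6 hb8
    simp only [SL, List.mem_flatMap, List.mem_range]
    refine ⟨c, by omega, d, by omega, e, by omega, f, by omega, ?_⟩
    rw [if_pos hp]
    simp only [List.mem_flatMap, List.mem_map, List.mem_filter, List.mem_range]
    exact ⟨a, by omega, b, ⟨⟨by omega, h⟩, rfl⟩⟩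

lemma mem_K3Z5Set (m : ℕ × ℕ × ℕ × ℕ × ℕ × ℕ) : m ∈ K3Z5Set ↔ m ∈ SL := by
  obtain ⟨a, b, c, d, e, f⟩ := m
  show K3Z5Cond a b c d e f ↔ _
  rw [cond_iff, mem_SL]

lemma tau_tau (m : ℕ × ℕ × ℕ × ℕ × ℕ × ℕ) : tauInv (tauInv m) = m := rfl

lemma condB_swap (a b c d e f : ℕ) :
    condB b a d c f e = true ↔ condB a b c d e f = true := by
  rw [condB_eq, condB_eq]
  omega

lemma tau_mem_SL (m : ℕ × ℕ × ℕ × ℕ × ℕ × ℕ) (hm : m ∈ SL) : tauInv m ∈ SL := by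
  obtain ⟨a, b, c, d, e, f⟩ := m
  rw [mem_SL] at hm
  show (b, a, d, c, f, e) ∈ SL
  rw [mem_SL, condB_swap]
  exact hm

/-- Mixed-radix encoding of a tuple, compatible with the enumeration order of `SL`. -/
def enc (m : ℕ × ℕ × ℕ × ℕ × ℕ × ℕ) : ℕ :=
  ((((m.2.2.1 * 9 + m.2.2.2.1) * 5 + m.2.2.2.2.1) * 5 + m.2.2.2.2.2) * 25 + m.1) * 25 + m.2.1

/-- Strict-increase check for a list of naturals. -/
def chainLt : List ℕ → Bool
  | [] => true
  | [_] => true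
  | x :: y :: t => Nat.blt x y && chainLt (y :: t)

lemma chainLt_iff : ∀ l : List ℕ, chainLt l = true ↔ List.Chain' (· < ·) l
  | [] => by simp [chainLt, List.Chain']
  | [x] => by simp [chainLt, List.Chain']
  | x :: y :: t => by
    simp [chainLt, Bool.and_eq_true, Nat.blt_eq, chainLt_iff (y :: t), List.isChain_cons_cons, List.Chain',
      and_comm]

lemma SL_chain : List.Chain' (· < ·) (SL.map enc) :=
  (chainLt_iff _).mp (by decide)

lemma SL_nodup : SL.Nodup := by
  have h2 : (SL.map enc).Nodup := (List.isChain_iff_pairwise.mp SL_chain).nodup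
  exact h2.of_map enc

lemma digit25 (X Y u v : ℕ) (hu : u < 25) (hv : v < 25) (h : X * 25 + u = Y * 25 + v) :
    X = Y ∧ u = v := by omega

lemma digit5 (X Y u v : ℕ) (hu : u < 5) (hv : v < 5) (h : X * 5 + u = Y * 5 + v) :
    X = Y ∧ u = v := by omega

lemma digit9 (X Y u v : ℕ) (hu : u < 9) (hv : v < 9) (h : X * 9 + u = Y * 9 + v) :
    X = Y ∧ u = v := by omega

lemma enc_inj (x y : ℕ × ℕ × ℕ × ℕ × ℕ × ℕ) (hx : x ∈ SL) (hy : y ∈ SL)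
    (h : enc x = enc y) : x = y := by
  obtain ⟨a, b, c, d, e, f⟩ := x
  obtain ⟨a', b', c', d', e', f'⟩ := y
  rw [mem_SL, condB_eq] at hx hy
  obtain ⟨x1, x2, x3, x4, x5, x6, x7, x8, x9⟩ := hx
  obtain ⟨y1, y2, y3, y4, y5, y6, y7, y8, y9⟩ := hy
  clear x2 x3 x4 x5 x6 x8 x9 y2 y3 y4 y5 y6 y8 y9
  simp only [enc] at h
  obtain ⟨h, hb⟩ := digit25 _ _ _ _ (by omega) (by omega) h
  obtain ⟨h, ha⟩ := digit25 _ _ _ _ (by omega) (by omega) h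
  obtain ⟨h, hf⟩ := digit5 _ _ _ _ (by omega) (by omega) h
  obtain ⟨h, he⟩ := digit5 _ _ _ _ (by omega) (by omega) h
  obtain ⟨hc, hd⟩ := digit9 _ _ _ _ (by omega) (by omega) h
  simp only [Prod.ext_iff]
  exact ⟨ha, hb, hc, hd, he, hf⟩

/-- The list of orbit representatives: solutions which are `enc`-minimal in their orbit. -/
def RL : List (ℕ × ℕ × ℕ × ℕ × ℕ × ℕ) := SL.filter fun m => Nat.ble (enc m) (enc (tauInv m))

lemma RL_length : RL.length = 285 := by decide

lemma RL_nodup : RL.Nodup := SL_nodup.filter _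

lemma mem_RL (m : ℕ × ℕ × ℕ × ℕ × ℕ × ℕ) :
    m ∈ RL ↔ m ∈ SL ∧ enc m ≤ enc (tauInv m) := by
  simp [RL, List.mem_filter, Nat.ble_eq]

lemma rep_exists (m : ℕ × ℕ × ℕ × ℕ × ℕ × ℕ) (hm : m ∈ SL) : m ∈ RL ∨ tauInv m ∈ RL := by
  rcases le_total (enc m) (enc (tauInv m)) with h | h
  · exact Or.inl ((mem_RL m).mpr ⟨hm, h⟩)
  · refine Or.inr ((mem_RL _).mpr ⟨tau_mem_SL m hm, ?_⟩)
    rw [tau_tau]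
    exact h

lemma rep_inj (r s : ℕ × ℕ × ℕ × ℕ × ℕ × ℕ) (hr : r ∈ RL) (hs : s ∈ RL)
    (h : r = s ∨ r = tauInv s) : r = s := by
  rcases h with h | h
  · exact h
  · rw [mem_RL] at hr hs
    have h1 : enc s ≤ enc (tauInv s) := hs.2
    have h2 : enc (tauInv s) ≤ enc s := by
      have := hr.2
      rw [h, tau_tau] at this
      exact this
    have : enc s = enc (tauInv s) := le_antisymm h1 h2
    have hst : s = tauInv s := enc_inj s (tauInv s) hs.1 (h ▸ hr.1) this
    rw [h, ← hst]

/-- Theorem 1.8(1): `τ` preserves `S`, and `τ` has exactly `285` orbits on `S`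
(the classification of locally linear pseudofree `ℤ/5`-actions on a K3 surface into
`285` classes, weakly equivalent classes being identified). -/
theorem stmt13 :
    tauInv '' K3Z5Set = K3Z5Set ∧
    {Q : Set (ℕ × ℕ × ℕ × ℕ × ℕ × ℕ) | ∃ x ∈ K3Z5Set, Q = {x, tauInv x}}.ncard = 285 := by
  constructor
  · apply Set.Subset.antisymm
    · rintro _ ⟨x, hx, rfl⟩
      rw [mem_K3Z5Set] at hx ⊢
      exact tau_mem_SL x hx
    · intro x hx
      refine ⟨tauInv x, ?_, tau_tau x⟩
      rw [mem_K3Z5Set] at hx ⊢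
      exact tau_mem_SL x hx
  · have hQ : {Q : Set (ℕ × ℕ × ℕ × ℕ × ℕ × ℕ) | ∃ x ∈ K3Z5Set, Q = {x, tauInv x}} =
        (fun x => ({x, tauInv x} : Set (ℕ × ℕ × ℕ × ℕ × ℕ × ℕ))) '' ↑RL.toFinset := by
      ext Q
      simp only [Set.mem_setOf_eq, Set.mem_image, Finset.mem_coe, List.mem_toFinset]
      constructor
      · rintro ⟨x, hx, rfl⟩
        rw [mem_K3Z5Set] at hx
        rcases rep_exists x hx with h | h
        · exact ⟨x, h, rfl⟩
        · exact ⟨tauInv x, h, by rw [Set.pair_comm, tau_tau]⟩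
      · rintro ⟨r, hr, rfl⟩
        exact ⟨r, (mem_K3Z5Set r).mpr (((mem_RL r).mp hr).1), rfl⟩
    rw [hQ]
    rw [Set.ncard_image_of_injOn, Set.ncard_coe_finset,
      List.toFinset_card_of_nodup RL_nodup, RL_length]
    intro r hr s hs h
    simp only [Finset.mem_coe, List.mem_toFinset] at hr hs
    have h' : ({r, tauInv r} : Set (ℕ × ℕ × ℕ × ℕ × ℕ × ℕ)) = {s, tauInv s} := h
    have hmem : r ∈ ({s, tauInv s} : Set (ℕ × ℕ × ℕ × ℕ × ℕ × ℕ)) := by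
      rw [← h']; exact Set.mem_insert _ _
    exact rep_inj r s hr hs hmem
end

section
/- Let S and τ be as follows: S is the set of 6-tuples (m11, m22, m12, m13, m14, m23) of nonnegative integers satisfying: m11+m22+m12+m13+m14+m23 ≤ 24; m11+m22+m12+m13+m14+m23 ≡ 4 (mod 5); -m11-m22+m14+m23 ≡ 4 (mod 5); -m11+3m22-m12+m13+m14-3m23 ≡ 1 (mod 5); 3m11-m22+m12-m13-3m14+m23 ≡ 1 (mod 5); and both b_+ = (1/5)(4 + 2m12 + 2m13 + 4m14 + 4m23) - 1 and b_- = (1/5)(20 + 4m11 + 4m22 + 2m12 + 2m13) - 1 are integers with 0 ≤ b_+ ≤ 3 and 0 ≤ b_- ≤ 19; and τ swaps m11 with m22, m12 with m13, and m14 with m23. Then exactly 41 of the τ-orbits in S consist of tuples satisfying none of the three conditions: (i) m11 = m22 = m12 = m13 = 0; (ii) m22 ≥ 2m13 + 2m14 + 3m23; (iii) m11 ≥ 2m12 + 3m14 + 2m23. -/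
/-- The three smoothability conditions (4.9)–(4.11) of Proposition 4.6 for the tuple
`(m₁₁, m₂₂, m₁₂, m₁₃, m₁₄, m₂₃)`: (i) `m₁₁ = m₂₂ = m₁₂ = m₁₃ = 0`;
(ii) `m₂₂ ≥ 2m₁₃ + 2m₁₄ + 3m₂₃`; (iii) `m₁₁ ≥ 2m₁₂ + 3m₁₄ + 2m₂₃`. -/
def smoothCond (m : ℕ × ℕ × ℕ × ℕ × ℕ × ℕ) : Prop :=
  (m.1 = 0 ∧ m.2.1 = 0 ∧ m.2.2.1 = 0 ∧ m.2.2.2.1 = 0) ∨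
  (m.2.1 ≥ 2 * m.2.2.2.1 + 2 * m.2.2.2.2.1 + 3 * m.2.2.2.2.2) ∨
  (m.1 ≥ 2 * m.2.2.1 + 3 * m.2.2.2.2.1 + 2 * m.2.2.2.2.2)


abbrev K3T := ℕ × ℕ × ℕ × ℕ × ℕ × ℕ

/-- Purely arithmetic (decidable) form of the constraints. -/
abbrev K3D (a b c d e f : ℕ) : Prop :=
  a + b + c + d + e + f ≤ 24 ∧
  (a + b + c + d + e + f) % 5 = 4 ∧
  (e + f + 4 * a + 4 * b) % 5 = 4 ∧
  (4 * a + 3 * b + 4 * c + d + e + 2 * f) % 5 = 1 ∧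
  (3 * a + 4 * b + c + 4 * d + 2 * e + f) % 5 = 1 ∧
  (4 + 2 * c + 2 * d + 4 * e + 4 * f) % 5 = 0 ∧
  5 ≤ 4 + 2 * c + 2 * d + 4 * e + 4 * f ∧ 4 + 2 * c + 2 * d + 4 * e + 4 * f ≤ 20 ∧
  (20 + 4 * a + 4 * b + 2 * c + 2 * d) % 5 = 0 ∧ 20 + 4 * a + 4 * b + 2 * c + 2 * d ≤ 100

instance smoothCond.decidable : DecidablePred smoothCond := fun m => by
  unfold smoothCond; infer_instance

lemma k3_ex_iff (n : ℕ) (k : ℤ) (_hk : 0 ≤ k) :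
    (∃ bp : ℤ, (bp : ℚ) = 1/5 * (n : ℚ) - 1 ∧ 0 ≤ bp ∧ bp ≤ k) ↔
      (n % 5 = 0 ∧ 5 ≤ n ∧ (n : ℤ) ≤ 5 * (k + 1)) := by
  constructor
  · rintro ⟨bp, h, h0, h1⟩
    have h5 : ((5 * (bp + 1) : ℤ) : ℚ) = (n : ℚ) := by push_cast; linarith
    have h5' : (5 * (bp + 1) : ℤ) = (n : ℤ) := by exact_mod_cast h5
    omega
  · rintro ⟨h1, h2, h3⟩
    obtain ⟨q, rfl⟩ : ∃ q : ℕ, n = 5 * q := ⟨n / 5, by omega⟩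
    refine ⟨(q : ℤ) - 1, by push_cast; ring, by omega, by push_cast at h3 ⊢; omega⟩

lemma k3_cond_iff (a b c d e f : ℕ) : K3Z5Cond a b c d e f ↔ K3D a b c d e f := by
  unfold K3Z5Cond
  have e1 : (4 + 2 * (c : ℚ) + 2 * d + 4 * e + 4 * f)
      = ((4 + 2 * c + 2 * d + 4 * e + 4 * f : ℕ) : ℚ) := by push_cast; ring
  have e2 : (20 + 4 * (a : ℚ) + 4 * b + 2 * c + 2 * d)
      = ((20 + 4 * a + 4 * b + 2 * c + 2 * d : ℕ) : ℚ) := by push_cast; ring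
  rw [e1, e2, k3_ex_iff _ 3 (by norm_num), k3_ex_iff _ 19 (by norm_num)]
  simp only [Nat.ModEq, Int.ModEq]
  constructor
  · rintro ⟨h1, h2, h3, h4, h5, h6, h7⟩
    refine ⟨h1, h2, ?_, ?_, ?_, ?_, ?_, ?_, ?_, ?_⟩ <;> omega
  · rintro ⟨h1, h2, h3, h4, h5, h6, h7, h8, h9, h10⟩
    refine ⟨h1, h2, ?_, ?_, ?_, ⟨?_, ?_, ?_⟩, ⟨?_, ?_, ?_⟩⟩ <;> omega

def k3BadList : List K3T := [(0,1,5,3,0,0), (0,2,1,5,1,0), (0,2,4,2,0,1), (0,3,0,4,1,1), (0,3,2,2,2,0), (0,3,3,1,0,2), (0,4,1,1,2,1), (0,4,2,0,0,3), (0,5,0,0,2,2), (0,7,1,5,1,0), (0,8,0,4,1,1), (1,0,3,5,0,0), (1,1,2,4,0,1), (1,1,4,2,1,0), (1,2,0,4,2,0), (1,2,1,3,0,2), (1,2,3,1,1,1), (1,3,0,2,0,3), (1,3,1,1,3,0), (1,3,2,0,1,2), (1,4,0,0,3,1), (1,5,3,5,0,0), (1,6,2,4,0,1), (1,7,0,4,2,0),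 (1,7,1,3,0,2), (1,8,0,2,0,3), (2,0,2,4,1,0), (2,0,5,1,0,1), (2,1,1,3,1,1), (2,1,3,1,2,0), (2,1,4,0,0,2), (2,2,0,2,1,2), (2,2,2,0,2,1), (2,3,0,0,4,0), (2,5,2,4,1,0), (2,6,1,3,1,1), (2,7,0,2,1,2), (3,0,1,3,2,0), (3,0,2,2,0,2), (3,0,4,0,1,1), (3,1,0,2,2,1), (3,1,1,1,0,3), (3,1,2,0,3,0), (3,2,0,0,0,4), (3,3,4,4,0,0), (3,4,3,3,0,1), (3,5,1,3,2,0), (3,5,2,2,0,2), (3,6,0,2,2,1), (3,6,1,1,0,3), (3,7,0,0,0,4), (4,0,0,2,3,0), (4,0,1,1,1,2), (4,1,0,0,1,3), (4,3,3,3,1,0), (4,4,2,2,1,1), (4,5,0,2,3,0), (4,5,1,1,1,2), (4,6,0,0,1,3), (5,0,0,0,2,2), (5,1,5,3,0,0), (5,2,4,2,0,1), (5,3,2,2,2,0), (5,3,3,1,0,2), (5,4,1,1,2,1), (5,4,2,0,0,3), (5,5,0,0,2,2), (6,1,4,2,1,0), (6,2,3,1,1,1), (6,3,1,1,3,0), (6,3,2,0,1,2),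 (6,4,0,0,3,1), (7,0,5,1,0,1), (7,1,3,1,2,0), (7,1,4,0,0,2), (7,2,2,0,2,1), (7,3,0,0,4,0), (8,0,4,0,1,1), (8,1,2,0,3,0)]

def k3RepList : List K3T := [(0,1,5,3,0,0), (0,2,1,5,1,0), (0,2,4,2,0,1), (0,3,0,4,1,1), (0,3,2,2,2,0), (0,3,3,1,0,2), (0,4,1,1,2,1), (0,4,2,0,0,3), (0,5,0,0,2,2), (0,7,1,5,1,0), (0,8,0,4,1,1), (1,1,2,4,0,1), (1,2,0,4,2,0), (1,2,1,3,0,2), (1,2,3,1,1,1), (1,3,0,2,0,3), (1,3,1,1,3,0), (1,3,2,0,1,2), (1,4,0,0,3,1), (1,5,3,5,0,0), (1,6,2,4,0,1), (1,7,0,4,2,0), (1,7,1,3,0,2), (1,8,0,2,0,3), (2,2,0,2,1,2), (2,3,0,0,4,0), (2,5,2,4,1,0), (2,6,1,3,1,1), (2,7,0,2,1,2), (3,3,4,4,0,0), (3,4,3,3,0,1), (3,5,1,3,2,0), (3,5,2,2,0,2), (3,6,0,2,2,1), (3,6,1,1,0,3), (3,7,0,0,0,4), (4,4,2,2,1,1),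 (4,5,0,2,3,0), (4,5,1,1,1,2), (4,6,0,0,1,3), (5,5,0,0,2,2)]

lemma k3_bounds {a b c d e f : ℕ} (h : K3D a b c d e f) :
    c < 9 ∧ d < 9 ∧ e < 5 ∧ f < 5 ∧ (c + d + 2 * e + 2 * f = 3 ∨ c + d + 2 * e + 2 * f = 8) ∧
      a < 25 ∧ b < 25 := by
  obtain ⟨h1, h2, h3, h4, h5, h6, h7, h8, h9, h10⟩ := h
  omega

set_option synthInstance.maxSize 400000 in
set_option synthInstance.maxHeartbeats 8000000 in
set_option maxHeartbeats 4000000 in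
set_option maxRecDepth 20000 in
lemma k3_complete : ∀ c < 9, ∀ d < 9, ∀ e < 5, ∀ f < 5,
    (c + d + 2 * e + 2 * f = 3 ∨ c + d + 2 * e + 2 * f = 8) → ∀ a < 25, ∀ b < 25,
    K3D a b c d e f → ¬ smoothCond (a, b, c, d, e, f) →
    ¬ smoothCond (tauInv (a, b, c, d, e, f)) → (a, b, c, d, e, f) ∈ k3BadList := by
  decide

lemma k3_sound : ∀ m ∈ k3BadList,
    K3D m.1 m.2.1 m.2.2.1 m.2.2.2.1 m.2.2.2.2.1 m.2.2.2.2.2 ∧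
      ¬ smoothCond m ∧ ¬ smoothCond (tauInv m) := by decide

lemma k3_rep_cover : ∀ m ∈ k3BadList, m ∈ k3RepList ∨ tauInv m ∈ k3RepList := by decide

lemma k3_rep_sub : ∀ m ∈ k3RepList, m ∈ k3BadList := by decide

lemma k3_rep_tau : ∀ m ∈ k3RepList, tauInv m = m ∨ tauInv m ∉ k3RepList := by decide

lemma k3_tau_tau (m : K3T) : tauInv (tauInv m) = m := rfl

/-- Theorem 1.8(2): exactly `41` of the `τ`-orbits in `S` consist of tuples satisfying none
of the three conditions (i), (ii), (iii). -/
theorem stmt14 :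
    {Q : Set (ℕ × ℕ × ℕ × ℕ × ℕ × ℕ) |
      (∃ x ∈ K3Z5Set, Q = {x, tauInv x}) ∧ ∀ y ∈ Q, ¬ smoothCond y}.ncard = 41 := by
  have hset : {Q : Set (ℕ × ℕ × ℕ × ℕ × ℕ × ℕ) |
      (∃ x ∈ K3Z5Set, Q = {x, tauInv x}) ∧ ∀ y ∈ Q, ¬ smoothCond y}
      = (fun x => ({x, tauInv x} : Set K3T)) '' ↑k3RepList.toFinset := by
    ext Q
    constructor
    · rintro ⟨⟨x, hxS, rfl⟩, hall⟩
      obtain ⟨a, b, c, d, e, f⟩ := x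
      have hD : K3D a b c d e f := (k3_cond_iff a b c d e f).1 hxS
      have hb := k3_bounds hD
      have hns1 : ¬ smoothCond (a, b, c, d, e, f) := hall _ (Set.mem_insert _ _)
      have hns2 : ¬ smoothCond (tauInv (a, b, c, d, e, f)) :=
        hall _ (Set.mem_insert_of_mem _ rfl)
      have hbad : (a, b, c, d, e, f) ∈ k3BadList :=
        k3_complete c hb.1 d hb.2.1 e hb.2.2.1 f hb.2.2.2.1 hb.2.2.2.2.1
          a hb.2.2.2.2.2.1 b hb.2.2.2.2.2.2 hD hns1 hns2
      rcases k3_rep_cover _ hbad with hr | hr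
      · exact ⟨_, by simpa using hr, rfl⟩
      · refine ⟨_, by simpa using hr, ?_⟩
        dsimp only
        rw [k3_tau_tau, Set.pair_comm]
    · rintro ⟨r, hr, rfl⟩
      have hr' : r ∈ k3RepList := by simpa using hr
      have hb := k3_sound r (k3_rep_sub r hr')
      refine ⟨⟨r, ?_, rfl⟩, ?_⟩
      · exact (k3_cond_iff r.1 r.2.1 r.2.2.1 r.2.2.2.1 r.2.2.2.2.1 r.2.2.2.2.2).2 hb.1
      · rintro y (rfl | rfl)
        · exact hb.2.1
        · exact hb.2.2
  rw [hset]
  have hinj : Set.InjOn (fun x => ({x, tauInv x} : Set K3T)) ↑k3RepList.toFinset := by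
    intro x hx y hy hxy
    have hx' : x ∈ k3RepList := by simpa using hx
    have hy' : y ∈ k3RepList := by simpa using hy
    dsimp only at hxy
    have hmx : x ∈ ({y, tauInv y} : Set K3T) := by rw [← hxy]; exact Set.mem_insert _ _
    rcases hmx with h | h
    · exact h
    · have hxy2 : x = tauInv y := h
      rcases k3_rep_tau y hy' with he | hn
      · rw [hxy2, he]
      · exact absurd (hxy2 ▸ hx') hn
  rw [Set.ncard_image_of_injOn hinj, Set.ncard_coe_finset]
  decide
end

section
/- Let l ≥ 0 be an integer and let (n, m22, m13, m12) be one of (10l+2, 1, 40l+3, 5), (10l+4, 2, 40l+11, 5), (10l+6, 3, 40l+19, 5), with m11 = m14 = m23 = 0. Then this data satisfies all of: m11+m22+m12+m13+m14+m23 ≤ 12n; m11+m22+m12+m13+m14+m23 ≡ -3n (mod 5); -m11-m22+m14+m23 ≡ 2n (mod 5); -m11+3m22-m12+m13+m14-3m23 ≡ 8n (mod 5); 3m11-m22+m12-m13-3m14+m23 ≡ 8n (mod 5); b_+ = (1/5)(2n + 2m12 + 2m13 + 4m14 + 4m23) - 1 is an integer with 0 ≤ b_+ ≤ 2n-1; b_-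 = (1/5)(10n + 4m11 + 4m22 + 2m12 + 2m13) - 1 is an integer with 0 ≤ b_- ≤ 10n-1; and it satisfies none of the three conditions: (i) m11 = m22 = m12 = m13 = 0; (ii) m22 ≥ 2m13 + 2m14 + 3m23; (iii) m11 ≥ 2m12 + 3m14 + 2m23. -/
/-- Key arithmetic verification in the proof of the `ℤ/5`-case of Theorem 1.2: for `E(n)`
(`e = 12n`, `s = -8n`, `b₊ = 2n-1`, `b₋ = 10n-1`), each of the three listed fixed point data
satisfies the realizability constraints (4.1)–(4.8) of Proposition 4.1 but none of the three
smoothability conditions (4.9)–(4.11) of Proposition 4.6. -/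
theorem stmt16 (l n m11 m22 m12 m13 m14 m23 : ℕ)
    (hcase : (n = 10 * l + 2 ∧ m22 = 1 ∧ m13 = 40 * l + 3 ∧ m12 = 5) ∨
             (n = 10 * l + 4 ∧ m22 = 2 ∧ m13 = 40 * l + 11 ∧ m12 = 5) ∨
             (n = 10 * l + 6 ∧ m22 = 3 ∧ m13 = 40 * l + 19 ∧ m12 = 5))
    (h11 : m11 = 0) (h14 : m14 = 0) (h23 : m23 = 0) :
    m11 + m22 + m12 + m13 + m14 + m23 ≤ 12 * n ∧
    ((m11 : ℤ) + m22 + m12 + m13 + m14 + m23) ≡ -3 * n [ZMOD 5] ∧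
    (-(m11 : ℤ) - m22 + m14 + m23) ≡ 2 * n [ZMOD 5] ∧
    (-(m11 : ℤ) + 3 * m22 - m12 + m13 + m14 - 3 * m23) ≡ 8 * n [ZMOD 5] ∧
    (3 * (m11 : ℤ) - m22 + m12 - m13 - 3 * m14 + m23) ≡ 8 * n [ZMOD 5] ∧
    (∃ bp : ℤ, (bp : ℚ) = 1/5 * (2 * n + 2 * m12 + 2 * m13 + 4 * m14 + 4 * m23) - 1 ∧
      0 ≤ bp ∧ (bp : ℚ) ≤ 2 * n - 1) ∧
    (∃ bm : ℤ, (bm : ℚ) = 1/5 * (10 * n + 4 * m11 + 4 * m22 + 2 * m12 + 2 * m13) - 1 ∧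
      0 ≤ bm ∧ (bm : ℚ) ≤ 10 * n - 1) ∧
    ¬(m11 = 0 ∧ m22 = 0 ∧ m12 = 0 ∧ m13 = 0) ∧
    ¬(m22 ≥ 2 * m13 + 2 * m14 + 3 * m23) ∧
    ¬(m11 ≥ 2 * m12 + 3 * m14 + 2 * m23) := by
  subst h11 h14 h23
  rcases hcase with ⟨hn, h22, h13, h12⟩ | ⟨hn, h22, h13, h12⟩ | ⟨hn, h22, h13, h12⟩ <;>
    subst hn h22 h13 h12
  · refine ⟨by omega, ?_, ?_, ?_, ?_,
      ⟨20 * l + 3, by push_cast; ring, by positivity, by push_cast; linarith⟩,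
      ⟨36 * l + 7, by push_cast; ring, by positivity, by push_cast; linarith⟩,
      by omega, by omega, by omega⟩ <;>
      (simp only [Int.ModEq]; push_cast; omega)
  · refine ⟨by omega, ?_, ?_, ?_, ?_,
      ⟨20 * l + 7, by push_cast; ring, by positivity, by push_cast; linarith⟩,
      ⟨36 * l + 15, by push_cast; ring, by positivity, by push_cast; linarith⟩,
      by omega, by omega, by omega⟩ <;>
      (simp only [Int.ModEq]; push_cast; omega)
  · refine ⟨by omega, ?_, ?_, ?_, ?_,
      ⟨20 * l + 11, by push_cast; ring, by positivity, by push_cast; linarith⟩,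
      ⟨36 * l + 23, by push_cast; ring, by positivity, by push_cast; linarith⟩,
      by omega, by omega, by omega⟩ <;>
      (simp only [Int.ModEq]; push_cast; omega)
end

section
/- Let n ≥ 2 be an even integer and consider the ℤ/7 fixed point data m33 = m24 = 7n/2, m14 = 4n, m23 = n, with all other m_{ij} equal to zero (indices ranging over the twelve types 11, 22, 33, 12, 24, 14, 15, 23, 13, 16, 25, 34). Set M1 = m11+m22+m33, M2 = m12+m24+m14, M3 = m16+m25+m34, M4 = m15+m23+m13. Then: the total number of fixed points Σ m_{ij} equals 12n and satisfies Σ m_{ij} ≡ -72n (mod 7); the four congruences -10M1 - 2M2 + 10M3 + 2M4 ≡ 8n (mod 7), -5m11+7m22+3m33-3m12+3m24+m14+5m16-7m25-3m34+3m15-3m23-m13 ≡ 8n (mod 7), 3m11-5m22+7m33+m12-3m24+3m14-3m16+5m25-7m34-m15+3m23-3m13 ≡ 8n (mod 7), and 7m11+3m22-5m33+3m12+m24-3m14-7m16-3m25+5m34-3m15-m23+3m13 ≡ 8n (mod 7) all hold; b_+ = (1/7)(2n - 2M1 + 2M2 + 8M3 + 4M4) - 1 equals 2n-1 and b_- = (1/7)(10n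 + 8M1 + 4M2 - 2M3 + 2M4) - 1 equals 10n-1; and the data satisfies none of the four conditions: (i) M2 ≥ 3M1 + 4M4; (ii) 3m22 + 2m33 ≥ m12 + 3m24 + 3m16 + 6m25 + 5m34 + 2m15 + 3m13; (iii) 2m11 + 3m33 ≥ m24 + 3m14 + 5m16 + 3m25 + 6m34 + 3m15 + 2m23; (iv) 3m11 + 2m22 ≥ 3m12 + m14 + 6m16 + 5m25 + 3m34 + 3m23 + 2m13. -/
/-- Key arithmetic verification in the proof of the `ℤ/7`-case of Theorem 1.2: for `E(n)`
(`e = 12n`, `s = -8n`, `b₊ = 2n-1`, `b₋ = 10n-1`) and the fixed point data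
`m₃₃ = m₂₄ = 7n/2`, `m₁₄ = 4n`, `m₂₃ = n`, all other `m_{ij} = 0`, the realizability
constraints (5.1)–(5.8) hold with `b₊^G = 2n-1` and `b₋^G = 10n-1`, while none of the four
smoothability conditions of Proposition 5.4 holds. -/
theorem stmt17 (n : ℕ) (hn : 2 ≤ n) (he : Even n)
    (m11 m22 m33 m12 m24 m14 m15 m23 m13 m16 m25 m34 : ℕ)
    (h33 : 2 * m33 = 7 * n) (h24 : 2 * m24 = 7 * n) (h14 : m14 = 4 * n) (h23 : m23 = n)
    (h11 : m11 = 0) (h22 : m22 = 0) (h12 : m12 = 0) (h15 : m15 = 0)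
    (h13 : m13 = 0) (h16 : m16 = 0) (h25 : m25 = 0) (h34 : m34 = 0) :
    (m11 + m22 + m33 + m12 + m24 + m14 + m15 + m23 + m13 + m16 + m25 + m34 = 12 * n) ∧
    (((m11 : ℤ) + m22 + m33 + m12 + m24 + m14 + m15 + m23 + m13 + m16 + m25 + m34)
      ≡ -72 * n [ZMOD 7]) ∧
    ((-10 * ((m11 : ℤ) + m22 + m33) - 2 * ((m12 : ℤ) + m24 + m14)
      + 10 * ((m16 : ℤ) + m25 + m34) + 2 * ((m15 : ℤ) + m23 + m13)) ≡ 8 * n [ZMOD 7]) ∧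
    ((-5 * (m11 : ℤ) + 7 * m22 + 3 * m33 - 3 * m12 + 3 * m24 + m14
      + 5 * m16 - 7 * m25 - 3 * m34 + 3 * m15 - 3 * m23 - m13) ≡ 8 * n [ZMOD 7]) ∧
    ((3 * (m11 : ℤ) - 5 * m22 + 7 * m33 + m12 - 3 * m24 + 3 * m14
      - 3 * m16 + 5 * m25 - 7 * m34 - m15 + 3 * m23 - 3 * m13) ≡ 8 * n [ZMOD 7]) ∧
    ((7 * (m11 : ℤ) + 3 * m22 - 5 * m33 + 3 * m12 + m24 - 3 * m14
      - 7 * m16 - 3 * m25 + 5 * m34 - 3 * m15 - m23 + 3 * m13) ≡ 8 * n [ZMOD 7]) ∧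
    ((1 : ℚ)/7 * (2 * n - 2 * ((m11 : ℚ) + m22 + m33) + 2 * ((m12 : ℚ) + m24 + m14)
      + 8 * ((m16 : ℚ) + m25 + m34) + 4 * ((m15 : ℚ) + m23 + m13)) - 1 = 2 * n - 1) ∧
    ((1 : ℚ)/7 * (10 * n + 8 * ((m11 : ℚ) + m22 + m33) + 4 * ((m12 : ℚ) + m24 + m14)
      - 2 * ((m16 : ℚ) + m25 + m34) + 2 * ((m15 : ℚ) + m23 + m13)) - 1 = 10 * n - 1) ∧
    ¬(m12 + m24 + m14 ≥ 3 * (m11 + m22 + m33) + 4 * (m15 + m23 + m13)) ∧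
    ¬(3 * m22 + 2 * m33 ≥ m12 + 3 * m24 + 3 * m16 + 6 * m25 + 5 * m34 + 2 * m15 + 3 * m13) ∧
    ¬(2 * m11 + 3 * m33 ≥ m24 + 3 * m14 + 5 * m16 + 3 * m25 + 6 * m34 + 3 * m15 + 2 * m23) ∧
    ¬(3 * m11 + 2 * m22 ≥ 3 * m12 + m14 + 6 * m16 + 5 * m25 + 3 * m34 + 3 * m23 + 2 * m13) := by
  obtain ⟨k, hk⟩ := he
  have hnk : n = 2 * k := by omega
  have hm33 : m33 = 7 * k := by omega
  have hm24 : m24 = 7 * k := by omega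
  have hk1 : 1 ≤ k := by omega
  subst h14 h23 h11 h22 h12 h15 h13 h16 h25 h34 hm33 hm24 hnk
  refine ⟨by ring, ?_, ?_, ?_, ?_, ?_, by push_cast; ring, by push_cast; ring, by omega, by omega, by omega, by omega⟩ <;>
  · show _ % (7:ℤ) = _ % (7:ℤ)
    push_cast
    omega
end
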